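/- arXiv:1612.06517 — 8 statements merged into one kernel-verified Lean document; each statement's English description precedes it below -/
import Mathlib

section
/- For 0 ≤ r ≤ k and θ > 0, the r-th elementary symmetric polynomial in x_1^θ,...,x_k^θ equals the ratio of generalized Schur-type determinants: e_r(x_1^θ,...,x_k^θ) = det[x_j^{μ_i^{(r)}+k-i}] / det[x_j^{μ_i^{(0)}+k-i}], where μ_l^{(r)} = (θ-1)(k-l)+θ for l ≤ r and μ_l^{(r)} = (θ-1)(k-l) for l > r, valid for positive real x_1,...,x_k. -/
open Matrix Polynomial Finset

lemma aux_Ioi {k : ℕ} (i : Fin k) :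
    Finset.Ioi (i.castSucc) =
      insert (Fin.last k) ((Finset.Ioi i).map Fin.castSuccEmb) := by
  ext j
  simp only [Finset.mem_Ioi, Finset.mem_insert, Finset.mem_map, Fin.lt_def,
    Fin.coe_castSucc, Fin.castSuccEmb]
  constructor
  · intro h
    rcases eq_or_lt_of_le (Nat.lt_succ_iff.mp j.isLt) with h2 | h2
    · left; exact Fin.ext h2
    · right
      exact ⟨⟨j, h2⟩, by simpa using h, by ext; simp⟩
  · rintro (rfl | ⟨a, ha, rfl⟩)
    · simpa using i.isLt
    · simpa using ha

lemma vdm_snoc {k : ℕ} (y : Fin k → ℝ) :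
    Matrix.det (Matrix.vandermonde (Fin.snoc (fun i => Polynomial.C (y i)) Polynomial.X)) =
      Polynomial.C (Matrix.det (Matrix.vandermonde y)) *
        ∏ i : Fin k, (Polynomial.X - Polynomial.C (y i)) := by
  rw [Matrix.det_vandermonde, Matrix.det_vandermonde, Fin.prod_univ_castSucc]
  have hlast : Finset.Ioi (Fin.last k) = ∅ := by
    ext j; simp only [Finset.mem_Ioi, Finset.notMem_empty, iff_false, not_lt, Fin.le_def,
      Fin.val_last]
    exact Nat.lt_succ_iff.mp j.isLt
  rw [hlast]
  simp only [Finset.prod_empty, mul_one]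
  have : ∀ i : Fin k, ∏ j ∈ Finset.Ioi i.castSucc,
      ((Fin.snoc (fun l => Polynomial.C (y l)) Polynomial.X : Fin (k+1) → Polynomial ℝ) j
        - (Fin.snoc (fun l => Polynomial.C (y l)) Polynomial.X : Fin (k+1) → Polynomial ℝ)
            i.castSucc) =
      (Polynomial.X - Polynomial.C (y i)) *
        ∏ j ∈ Finset.Ioi i, (Polynomial.C (y j) - Polynomial.C (y i)) := by
    intro i
    have hnm : Fin.last k ∉ (Finset.Ioi i).map Fin.castSuccEmb := by
      simp only [Finset.mem_map, Fin.castSuccEmb, not_exists]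
      rintro a ⟨_, ha⟩
      exact absurd (congrArg Fin.val ha) (by simp; omega)
    rw [aux_Ioi, Finset.prod_insert hnm, Finset.prod_map, Fin.snoc_last, Fin.snoc_castSucc]
    congr 1
    refine Finset.prod_congr rfl fun a _ => ?_
    show (Fin.snoc (fun l => Polynomial.C (y l)) Polynomial.X : Fin (k+1) → Polynomial ℝ)
      (Fin.castSucc a) - _ = _
    rw [Fin.snoc_castSucc]
  rw [Finset.prod_congr rfl fun i _ => this i, Finset.prod_mul_distrib, map_prod]
  rw [mul_comm]
  congr 1
  refine Finset.prod_congr rfl fun i _ => ?_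
  rw [map_prod]
  exact Finset.prod_congr rfl fun j _ => (map_sub Polynomial.C _ _).symm

lemma key_det (k r : ℕ) (hr : r ≤ k) (y : Fin k → ℝ) :
    Matrix.det (Matrix.of fun i j : Fin k =>
        y i ^ ((((⟨k - r, by omega⟩ : Fin (k+1)).succAbove j : Fin (k+1)) : ℕ))) =
      (∑ T ∈ Finset.univ.powersetCard r, ∏ i ∈ T, y i) *
        Matrix.det (Matrix.vandermonde y) := by
  set w : Fin (k+1) → Polynomial ℝ := Fin.snoc (fun i => Polynomial.C (y i)) Polynomial.X with hw
  set N : Fin (k+1) → ℝ := fun j0 => Matrix.det (Matrix.of fun i j : Fin k =>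
    y i ^ (((j0.succAbove j : Fin (k+1)) : ℕ))) with hN
  have hsub : ∀ j0 : Fin (k+1),
      (Matrix.vandermonde w).submatrix Fin.castSucc j0.succAbove =
      (Matrix.of fun i j : Fin k => y i ^ (((j0.succAbove j : Fin (k+1)) : ℕ))).map
        Polynomial.C := by
    intro j0
    ext i j
    simp [Matrix.vandermonde, w, Fin.snoc_castSucc, map_pow]
  have hC : ∀ m : ℕ, ((-1 : Polynomial ℝ))^m = Polynomial.C ((-1:ℝ)^m) := by
    intro m; simp
  have expand : Matrix.det (Matrix.vandermonde w) =
      ∑ j : Fin (k+1), Polynomial.C ((-1)^(k + (j:ℕ)) * N j) * Polynomial.X ^ (j:ℕ) := by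
    rw [Matrix.det_succ_row _ (Fin.last k)]
    refine Finset.sum_congr rfl fun j _ => ?_
    rw [Fin.succAbove_last, hsub j]
    have hdet : ((Matrix.of fun i j' : Fin k =>
        y i ^ (((j.succAbove j' : Fin (k+1)) : ℕ))).map (Polynomial.C : ℝ → Polynomial ℝ)).det =
        Polynomial.C (N j) := by
      rw [← RingHom.mapMatrix_apply, ← RingHom.map_det]
    rw [hdet]
    have h1 : Matrix.vandermonde w (Fin.last k) j = Polynomial.X ^ (j : ℕ) := by
      simp [Matrix.vandermonde, w, Fin.snoc_last]
    rw [h1, Fin.val_last, Polynomial.C_mul, ← hC]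
    ring
  have hcard : Multiset.card (Multiset.map y Finset.univ.val) = k := by simp
  have coeffR : (Polynomial.C (Matrix.det (Matrix.vandermonde y)) *
      ∏ i : Fin k, (Polynomial.X - Polynomial.C (y i))).coeff (k - r) =
      Matrix.det (Matrix.vandermonde y) *
        ((-1)^r * ∑ T ∈ Finset.univ.powersetCard r, ∏ i ∈ T, y i) := by
    rw [Polynomial.coeff_C_mul]
    have hprod : ∏ i : Fin k, (Polynomial.X - Polynomial.C (y i)) =
        (Multiset.map (fun t => Polynomial.X - Polynomial.C t)
          (Multiset.map y Finset.univ.val)).prod := by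
      rw [Multiset.map_map]; rfl
    rw [hprod, Multiset.prod_X_sub_C_coeff _ (by rw [hcard]; omega), hcard]
    have h2 : k - (k - r) = r := by omega
    rw [h2, Finset.esymm_map_val]
  have coeffL : (∑ j : Fin (k+1), Polynomial.C ((-1:ℝ)^(k + (j:ℕ)) * N j) *
      Polynomial.X ^ (j:ℕ)).coeff (k - r) =
      (-1)^(k + (k - r)) * N ⟨k - r, by omega⟩ := by
    rw [Polynomial.finset_sum_coeff]
    rw [Finset.sum_eq_single (⟨k - r, by omega⟩ : Fin (k+1))]
    · rw [Polynomial.coeff_C_mul, Polynomial.coeff_X_pow, if_pos rfl, mul_one]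
    · intro b _ hb
      simp only [Polynomial.coeff_C_mul, Polynomial.coeff_X_pow]
      rw [if_neg, mul_zero]
      intro h
      exact hb (Fin.ext h.symm)
    · simp
  have hEq : (-1:ℝ)^(k + (k - r)) * N ⟨k - r, by omega⟩ =
      Matrix.det (Matrix.vandermonde y) *
        ((-1)^r * ∑ T ∈ Finset.univ.powersetCard r, ∏ i ∈ T, y i) := by
    rw [← coeffL, ← coeffR, ← expand, vdm_snoc]
  have hsign : (-1:ℝ)^(k + (k - r)) * ((-1:ℝ)^(k + (k - r))) = 1 := by
    rw [← pow_add]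
    have : (k + (k - r)) + (k + (k - r)) = 2 * (k + (k - r)) := by omega
    rw [this, pow_mul]
    norm_num
  have : N ⟨k - r, by omega⟩ = (-1:ℝ)^(k + (k - r)) * (Matrix.det (Matrix.vandermonde y) *
        ((-1)^r * ∑ T ∈ Finset.univ.powersetCard r, ∏ i ∈ T, y i)) := by
    rw [← hEq, ← mul_assoc, hsign, one_mul]
  rw [show Matrix.det (Matrix.of fun i j : Fin k =>
        y i ^ ((((⟨k - r, by omega⟩ : Fin (k+1)).succAbove j : Fin (k+1)) : ℕ))) =
      N ⟨k - r, by omega⟩ from rfl, this]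
  have hpar : (-1:ℝ)^(k + (k - r)) * (-1:ℝ)^r = 1 := by
    rw [← pow_add]
    have : (k + (k - r)) + r = 2 * k := by omega
    rw [this, pow_mul]; norm_num
  linear_combination (Matrix.det (Matrix.vandermonde y) *
    (∑ T ∈ Finset.univ.powersetCard r, ∏ i ∈ T, y i)) * hpar

/-- e_r(x_1^θ,...,x_k^θ) equals a ratio of generalized Schur-type determinants with real
exponents μ_l^{(r)} = (θ-1)(k-l) + θ·[l ≤ r]. -/
theorem esymm_pow_eq_det_ratio (k r : ℕ) (hr : r ≤ k) (θ : ℝ) (hθ : 0 < θ)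
    (x : Fin k → ℝ) (hx : ∀ i, 0 < x i) (hinj : Function.Injective x) :
    (∑ T ∈ Finset.univ.powersetCard r, ∏ i ∈ T, x i ^ θ) =
      Matrix.det (Matrix.of fun i j : Fin k =>
          x j ^ (((θ - 1) * (k - 1 - (i : ℕ)) + (if (i : ℕ) < r then θ else 0))
            + ((k : ℝ) - 1 - (i : ℕ)))) /
      Matrix.det (Matrix.of fun i j : Fin k =>
          x j ^ ((θ - 1) * (k - 1 - (i : ℕ)) + ((k : ℝ) - 1 - (i : ℕ)))) := by
  set y : Fin k → ℝ := fun i => x i ^ θ with hy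
  have hyinj : Function.Injective y := by
    intro a b hab
    apply hinj
    by_contra hne
    rcases lt_or_gt_of_ne hne with h | h
    · exact absurd hab (ne_of_lt (Real.rpow_lt_rpow (hx a).le h hθ))
    · exact absurd hab.symm (ne_of_lt (Real.rpow_lt_rpow (hx b).le h hθ))
  have hV : Matrix.det (Matrix.vandermonde y) ≠ 0 :=
    Matrix.det_vandermonde_ne_zero_iff.mpr hyinj
  have hcast : ∀ i : Fin k, ((k - 1 - (i:ℕ) : ℕ) : ℝ) = (k:ℝ) - 1 - (i:ℕ) := by
    intro i
    have := i.isLt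
    rw [Nat.cast_sub (by omega), Nat.cast_sub (by omega)]
    push_cast
    ring
  have hnum : (Matrix.of fun i j : Fin k =>
      x j ^ (((θ - 1) * (k - 1 - (i : ℕ)) + (if (i : ℕ) < r then θ else 0))
        + ((k : ℝ) - 1 - (i : ℕ)))) =
      Matrix.of fun i j : Fin k =>
        y j ^ ((k - 1 - (i:ℕ)) + (if (i:ℕ) < r then 1 else 0)) := by
    ext i j
    have hexp : ((θ - 1) * ((k:ℝ) - 1 - (i : ℕ)) + (if (i : ℕ) < r then θ else 0))
        + ((k : ℝ) - 1 - (i : ℕ)) =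
        θ * ((((k - 1 - (i:ℕ)) + (if (i:ℕ) < r then 1 else 0) : ℕ)) : ℝ) := by
      push_cast
      rw [hcast i]
      split_ifs <;> push_cast <;> ring
    rw [Matrix.of_apply, Matrix.of_apply, hexp, Real.rpow_mul (hx j).le,
      Real.rpow_natCast]
  have hden : (Matrix.of fun i j : Fin k =>
      x j ^ ((θ - 1) * (k - 1 - (i : ℕ)) + ((k : ℝ) - 1 - (i : ℕ)))) =
      Matrix.of fun i j : Fin k => y j ^ (k - 1 - (i:ℕ)) := by
    ext i j
    have hexp : (θ - 1) * ((k:ℝ) - 1 - (i : ℕ)) + ((k : ℝ) - 1 - (i : ℕ)) =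
        θ * (((k - 1 - (i:ℕ) : ℕ)) : ℝ) := by
      rw [hcast i]; ring
    rw [Matrix.of_apply, Matrix.of_apply, hexp, Real.rpow_mul (hx j).le,
      Real.rpow_natCast]
  rw [hnum, hden]
  have hsa : ∀ j : Fin k, (((⟨k - r, by omega⟩ : Fin (k+1)).succAbove j : Fin (k+1)) : ℕ)
      = if (j:ℕ) < k - r then (j:ℕ) else (j:ℕ)+1 := by
    intro j
    have hcond : (j.castSucc < (⟨k - r, by omega⟩ : Fin (k+1))) ↔ (j:ℕ) < k - r := by
      simp [Fin.lt_def]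
    by_cases h : (j:ℕ) < k - r
    · rw [Fin.succAbove, if_pos (hcond.mpr h), if_pos h, Fin.coe_castSucc]
    · rw [Fin.succAbove, if_neg (fun hc => h (hcond.mp hc)), if_neg h, Fin.val_succ]
  have hnum2 : Matrix.det (Matrix.of fun i j : Fin k =>
        y j ^ ((k - 1 - (i:ℕ)) + (if (i:ℕ) < r then 1 else 0))) =
      ((Equiv.Perm.sign (Fin.revPerm : Equiv.Perm (Fin k)) : ℤ) : ℝ) *
        ((∑ T ∈ Finset.univ.powersetCard r, ∏ i ∈ T, y i) *
          Matrix.det (Matrix.vandermonde y)) := by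
    rw [show (Matrix.of fun i j : Fin k =>
          y j ^ ((k - 1 - (i:ℕ)) + (if (i:ℕ) < r then 1 else 0))) =
        (Matrix.of fun i j : Fin k =>
          y i ^ ((k - 1 - (j:ℕ)) + (if (j:ℕ) < r then 1 else 0)))ᵀ from rfl,
      Matrix.det_transpose]
    have hperm : (Matrix.of fun i j : Fin k =>
          y i ^ ((k - 1 - (j:ℕ)) + (if (j:ℕ) < r then 1 else 0))) =
        (Matrix.of fun i j : Fin k =>
          y i ^ ((((⟨k - r, by omega⟩ : Fin (k+1)).succAbove j : Fin (k+1)) : ℕ))).submatrix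
          id Fin.revPerm := by
      ext i j
      rw [Matrix.submatrix_apply, Matrix.of_apply, Matrix.of_apply, id]
      congr 1
      rw [show (Fin.revPerm j : Fin k) = j.rev from rfl, hsa j.rev, Fin.val_rev]
      have := j.isLt
      split_ifs <;> omega
    rw [hperm, Matrix.det_permute', key_det k r hr y]
  have hden2 : Matrix.det (Matrix.of fun i j : Fin k => y j ^ (k - 1 - (i:ℕ))) =
      ((Equiv.Perm.sign (Fin.revPerm : Equiv.Perm (Fin k)) : ℤ) : ℝ) *
        Matrix.det (Matrix.vandermonde y) := by
    rw [show (Matrix.of fun i j : Fin k => y j ^ (k - 1 - (i:ℕ))) =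
        (Matrix.of fun i j : Fin k => y i ^ (k - 1 - (j:ℕ)))ᵀ from rfl,
      Matrix.det_transpose]
    have hperm : (Matrix.of fun i j : Fin k => y i ^ (k - 1 - (j:ℕ))) =
        (Matrix.vandermonde y).submatrix id Fin.revPerm := by
      ext i j
      rw [Matrix.submatrix_apply, Matrix.of_apply, Matrix.vandermonde_apply, id]
      congr 1
      rw [show (Fin.revPerm j : Fin k) = j.rev from rfl, Fin.val_rev]
      have := j.isLt
      omega
    rw [hperm, Matrix.det_permute']
  rw [hnum2, hden2]
  have hs : ((Equiv.Perm.sign (Fin.revPerm : Equiv.Perm (Fin k)) : ℤ) : ℝ) ≠ 0 := by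
    rcases Int.units_eq_one_or (Equiv.Perm.sign (Fin.revPerm : Equiv.Perm (Fin k))) with h | h <;>
      rw [h] <;> norm_num
  rw [mul_div_mul_left _ _ hs, mul_div_cancel_right₀ _ hV]
end

section
/- The Selberg integral at τ = 1: ∫_{[0,1]^N} ∏_{i=1}^N x_i^{α_1-1}(1-x_i)^{α_2-1} ∏_{1≤j<k≤N}(x_j-x_k)^2 dx = ∏_{j=0}^{N-1} Γ(α_1+j)Γ(α_2+j)Γ(2+j)/Γ(α_1+α_2+N+j-1), for α_1, α_2 > 0. -/
open MeasureTheory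

open MeasureTheory Finset Equiv

noncomputable def Bet (p q : ℝ) : ℝ := Real.Gamma p * Real.Gamma q / Real.Gamma (p+q)

lemma complex_integrand_eq {p q x : ℝ} (hx : 0 ≤ x) (hx1 : x ≤ 1) :
    (x:ℂ) ^ ((p:ℂ) - 1) * (1 - (x:ℂ)) ^ ((q:ℂ) - 1)
      = ((x ^ (p-1) * (1-x) ^ (q-1) : ℝ) : ℂ) := by
  rw [Complex.ofReal_mul, Complex.ofReal_cpow hx, Complex.ofReal_cpow (by linarith)]
  push_cast
  ring_nf

lemma betaIntegrableOn {p q : ℝ} (hp : 0 < p) (hq : 0 < q) :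
    IntegrableOn (fun t => t ^ (p-1) * (1-t) ^ (q-1)) (Set.Ioo (0:ℝ) 1) := by
  have h := Complex.betaIntegral_convergent (u := (p:ℂ)) (v := (q:ℂ)) (by simpa) (by simpa)
  rw [intervalIntegrable_iff_integrableOn_Ioo_of_le (by norm_num)] at h
  have h2 := h.re
  refine MeasureTheory.IntegrableOn.congr_fun h2 (fun x hx => ?_) measurableSet_Ioo
  simp [complex_integrand_eq hx.1.le hx.2.le]

lemma betaIntegral_real {p q : ℝ} (hp : 0 < p) (hq : 0 < q) :
    ∫ t in Set.Ioo (0:ℝ) 1, t ^ (p-1) * (1-t) ^ (q-1) = Bet p q := by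
  have h := Complex.Gamma_mul_Gamma_eq_betaIntegral (s := (p:ℂ)) (t := (q:ℂ))
    (by simpa) (by simpa)
  have hb : Complex.betaIntegral p q = ((∫ t in Set.Ioo (0:ℝ) 1,
      t ^ (p-1) * (1-t) ^ (q-1) : ℝ) : ℂ) := by
    rw [Complex.betaIntegral]
    rw [intervalIntegral.integral_of_le (by norm_num : (0:ℝ) ≤ 1)]
    rw [setIntegral_congr_fun measurableSet_Ioc
      (fun x hx => complex_integrand_eq hx.1.le hx.2)]
    rw [MeasureTheory.integral_Ioc_eq_integral_Ioo]
    exact integral_ofReal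
  rw [hb, ← Complex.ofReal_add, Complex.Gamma_ofReal, Complex.Gamma_ofReal,
    Complex.Gamma_ofReal, ← Complex.ofReal_mul, ← Complex.ofReal_mul] at h
  have h' := Complex.ofReal_injective h
  have hne : Real.Gamma (p+q) ≠ 0 := (Real.Gamma_pos_of_pos (by linarith)).ne'
  rw [Bet, eq_div_iff hne, mul_comm]
  exact h'.symm

noncomputable def wfn (a b : ℝ) : ℝ → ℝ := fun t => t ^ (a-1) * (1-t) ^ (b-1)

variable {a b : ℝ}

lemma moment_congr (n k : ℕ) :
    Set.EqOn (fun t : ℝ => t ^ n * (1-t) ^ k * wfn a b t)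
      (fun t : ℝ => t ^ (a + n - 1) * (1-t) ^ (b + k - 1)) (Set.Ioo 0 1) := by
  intro t ht
  simp only [wfn]
  rw [← Real.rpow_natCast t n, ← Real.rpow_natCast (1-t) k,
    show t ^ (n:ℝ) * (1-t) ^ (k:ℝ) * (t ^ (a-1) * (1-t) ^ (b-1))
      = (t ^ (n:ℝ) * t ^ (a-1)) * ((1-t) ^ (k:ℝ) * (1-t) ^ (b-1)) by ring,
    ← Real.rpow_add ht.1, ← Real.rpow_add (by simp only [Set.mem_Ioo] at ht; linarith)]
  congr 1 <;> ring_nf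

lemma moment_value (ha : 0 < a) (hb : 0 < b) (n k : ℕ) :
    ∫ t in Set.Ioo (0:ℝ) 1, t ^ n * (1-t) ^ k * wfn a b t = Bet (a + n) (b + k) := by
  rw [setIntegral_congr_fun measurableSet_Ioo (moment_congr n k)]
  have := betaIntegral_real (p := a + n) (q := b + k)
    (by positivity) (by positivity)
  simpa using this

lemma moment_integrableOn_Ioo (ha : 0 < a) (hb : 0 < b) (n k : ℕ) :
    IntegrableOn (fun t : ℝ => t ^ n * (1-t) ^ k * wfn a b t) (Set.Ioo (0:ℝ) 1) := by
  have h := betaIntegrableOn (p := a + n) (q := b + k) (by positivity) (by positivity)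
  exact h.congr_fun (fun x hx => (moment_congr n k hx).symm) measurableSet_Ioo

lemma moment_integrableOn_Icc (ha : 0 < a) (hb : 0 < b) (n k : ℕ) :
    IntegrableOn (fun t : ℝ => t ^ n * (1-t) ^ k * wfn a b t) (Set.Icc (0:ℝ) 1) := by
  have h := moment_integrableOn_Ioo (a := a) (b := b) ha hb n k
  exact h.congr_set_ae Ioo_ae_eq_Icc.symm

/-- the binomial/beta row-operation identity -/
lemma binom_moment (ha : 0 < a) (hb : 0 < b) {N : ℕ} (i j : Fin N) :
    ∑ m : Fin N, ((-1:ℝ)) ^ (m:ℕ) * ((i:ℕ).choose (m:ℕ) : ℝ) * Bet (a + ((m:ℕ) + (j:ℕ))) b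
      = Bet (a + (j:ℕ)) (b + (i:ℕ)) := by
  have hterm : ∀ m : Fin N, ((-1:ℝ)) ^ (m:ℕ) * ((i:ℕ).choose (m:ℕ) : ℝ) * Bet (a + ((m:ℕ) + (j:ℕ))) b
      = ∫ t in Set.Ioo (0:ℝ) 1,
        ((-1:ℝ)) ^ (m:ℕ) * ((i:ℕ).choose (m:ℕ) : ℝ) * (t ^ ((m:ℕ) + (j:ℕ)) * (1-t) ^ (0:ℕ) * wfn a b t) := by
    intro m
    rw [MeasureTheory.integral_const_mul, moment_value ha hb]
    push_cast
    ring_nf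
  rw [Finset.sum_congr rfl (fun m _ => hterm m), ← integral_finset_sum]
  · rw [show (fun t : ℝ => ∑ m : Fin N, ((-1:ℝ)) ^ (m:ℕ) * ((i:ℕ).choose (m:ℕ) : ℝ)
        * (t ^ ((m:ℕ) + (j:ℕ)) * (1-t) ^ (0:ℕ) * wfn a b t))
        = fun t : ℝ => t ^ (j:ℕ) * (1-t) ^ (i:ℕ) * wfn a b t from ?_, moment_value ha hb]
    funext t
    have hbin : ∑ m : Fin N, ((-1:ℝ)) ^ (m:ℕ) * ((i:ℕ).choose (m:ℕ) : ℝ) * t ^ (m:ℕ)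
        = (1 - t) ^ (i:ℕ) := by
      rw [Fin.sum_univ_eq_sum_range (fun m => ((-1:ℝ)) ^ m * ((i:ℕ).choose m : ℝ) * t ^ m)]
      rw [show (1 - t) = (-t) + 1 by ring, add_pow]
      rw [← Finset.sum_subset (Finset.range_subset_range.2 (Nat.succ_le_of_lt i.2))]
      · apply Finset.sum_congr rfl
        intro m _
        rw [neg_pow]
        ring
      · intro m _ hm
        simp only [Finset.mem_range, not_lt] at hm
        rw [Nat.choose_eq_zero_of_lt (by omega)]
        simp
    calc ∑ m : Fin N, ((-1:ℝ)) ^ (m:ℕ) * ((i:ℕ).choose (m:ℕ) : ℝ) * (t ^ ((m:ℕ) + (j:ℕ)) * (1-t) ^ (0:ℕ) * wfn a b t)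
        = (∑ m : Fin N, ((-1:ℝ)) ^ (m:ℕ) * ((i:ℕ).choose (m:ℕ) : ℝ) * t ^ (m:ℕ)) * (t ^ (j:ℕ) * wfn a b t) := by
          rw [Finset.sum_mul]
          apply Finset.sum_congr rfl
          intro m _
          rw [pow_add]
          ring
      _ = t ^ (j:ℕ) * (1-t) ^ (i:ℕ) * wfn a b t := by rw [hbin]; ring
  · intro m _
    exact ((moment_integrableOn_Ioo ha hb ((m:ℕ)+(j:ℕ)) 0).const_mul _)

lemma gamma_prod_Ico {x : ℝ} (hx : 0 < x) {i n : ℕ} (h : i ≤ n) :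
    Real.Gamma (x + n) = Real.Gamma (x + i) * ∏ t ∈ Finset.Ico i n, (x + t) := by
  induction n, h using Nat.le_induction with
  | base => simp
  | succ n hin ih =>
      have h1 : (x + ((n:ℕ)+1:ℕ) : ℝ) = (x + n) + 1 := by push_cast; ring
      rw [Finset.prod_Ico_succ_top hin, h1,
        Real.Gamma_add_one (by positivity : (0:ℝ) < x + n).ne', ih]
      ring

lemma prod_Ioi_sub (N : ℕ) (i : Fin N) :
    ∏ j ∈ Finset.Ioi i, ((j:ℕ) - (i:ℕ)) = Nat.factorial (N - 1 - (i:ℕ)) := by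
  rw [← Finset.prod_range_add_one_eq_factorial]
  refine Finset.prod_bij' (fun (j : Fin N) (_ : j ∈ Finset.Ioi i) => (j:ℕ) - (i:ℕ) - 1)
    (fun k (hk : k ∈ Finset.range (N - 1 - (i:ℕ))) =>
      (⟨(i:ℕ) + k + 1, by simp only [Finset.mem_range] at hk; omega⟩ : Fin N))
    ?_ ?_ ?_ ?_ ?_
  · intro j hj
    have hj' : i < j := Finset.mem_Ioi.mp hj
    rw [Fin.lt_def] at hj'
    simp only [Finset.mem_range]
    have := j.2
    omega
  · intro k hk
    simp only [Finset.mem_range] at hk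
    refine Finset.mem_Ioi.mpr ?_
    rw [Fin.lt_def]
    dsimp only
    omega
  · intro j hj
    have hj' : i < j := Finset.mem_Ioi.mp hj
    rw [Fin.lt_def] at hj'
    apply Fin.ext
    dsimp only
    omega
  · intro k hk
    simp only [Finset.mem_range] at hk
    dsimp only
    omega
  · intro j hj
    have hj' : i < j := Finset.mem_Ioi.mp hj
    rw [Fin.lt_def] at hj'
    omega

lemma prod_Ioi_real (N : ℕ) (i : Fin N) :
    ∏ j ∈ Finset.Ioi i, ((j:ℝ) - (i:ℝ)) = ((N - 1 - (i:ℕ)).factorial : ℝ) := by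
  rw [← prod_Ioi_sub N i, Nat.cast_prod]
  refine Finset.prod_congr rfl (fun j hj => ?_)
  have hij : i < j := Finset.mem_Ioi.mp hj
  rw [Fin.lt_def] at hij
  rw [Nat.cast_sub (le_of_lt hij)]

lemma rev_val (N : ℕ) (i : Fin N) : ((Fin.rev i : Fin N) : ℕ) = N - 1 - (i:ℕ) := by
  rw [Fin.val_rev]; omega

lemma rev_prod_eq {M : Type*} [CommMonoid M] (N : ℕ) (g : ℕ → M) :
    ∏ i : Fin N, g (N - 1 - (i:ℕ)) = ∏ i : Fin N, g (i:ℕ) := by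
  rw [← Equiv.prod_comp Fin.revPerm (fun i : Fin N => g (i:ℕ))]
  exact Finset.prod_congr rfl (fun i _ => by
    rw [show ((Fin.revPerm i : Fin N) : ℕ) = N - 1 - (i:ℕ) from rev_val N i])

lemma hankel_det {a b : ℝ} (ha : 0 < a) (hb : 0 < b) (N : ℕ) (hN : 1 ≤ N) :
    Matrix.det (Matrix.of fun i j : Fin N => Bet (a + ((i:ℕ) + (j:ℕ))) b)
      = ∏ k ∈ Finset.range N,
          ((k.factorial : ℝ) *
            (Real.Gamma (a + k) * Real.Gamma (b + k) / Real.Gamma (a + b + ((N - 1 : ℕ):ℝ) + k))) := by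
  classical
  set H : Matrix (Fin N) (Fin N) ℝ :=
    Matrix.of (fun i j : Fin N => Bet (a + ((i:ℕ) + (j:ℕ))) b) with hH
  set L : Matrix (Fin N) (Fin N) ℝ :=
    Matrix.of (fun i m : Fin N => (-1:ℝ) ^ (m:ℕ) * ((i:ℕ).choose (m:ℕ) : ℝ)) with hLdef
  -- determinant of L
  have hLtri : L.BlockTriangular OrderDual.toDual := by
    intro i j hij
    have hlt : (i:ℕ) < (j:ℕ) := hij
    simp only [hLdef, Matrix.of_apply]
    rw [Nat.choose_eq_zero_of_lt hlt]
    simp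
  have hdetL : L.det = ∏ i : Fin N, (-1:ℝ) ^ (i:ℕ) := by
    rw [Matrix.det_of_lowerTriangular L hLtri]
    refine Finset.prod_congr rfl (fun i _ => ?_)
    simp [hLdef]
  -- row operations
  set M2 : Matrix (Fin N) (Fin N) ℝ :=
    Matrix.of (fun i j : Fin N => Bet (a + (j:ℕ)) (b + (i:ℕ))) with hM2
  have hmul : L * H = M2 := by
    ext i j
    rw [Matrix.mul_apply]
    simpa [hLdef, hH, hM2] using binom_moment ha hb i j
  -- the inverse-Gamma kernel
  set K : Matrix (Fin N) (Fin N) ℝ :=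
    Matrix.of (fun i j : Fin N => (Real.Gamma (a + b + (i:ℕ) + (j:ℕ)))⁻¹) with hK
  have hdetM2 : M2.det = (∏ i : Fin N, Real.Gamma (b + (i:ℕ))) *
      ((∏ j : Fin N, Real.Gamma (a + (j:ℕ))) * K.det) := by
    have : M2 = Matrix.of (fun i j : Fin N => Real.Gamma (b + (i:ℕ)) *
        (Matrix.of (fun i j : Fin N => Real.Gamma (a + (j:ℕ)) * K i j)) i j) := by
      ext i j
      simp only [hM2, hK, Matrix.of_apply, Bet]
      rw [show a + (j:ℕ) + (b + (i:ℕ)) = a + b + (i:ℕ) + (j:ℕ) by push_cast; ring]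
      field_simp
    rw [this, Matrix.det_mul_column, Matrix.det_mul_row]
  -- polynomial factorization of K
  set P : ℕ → Polynomial ℝ := fun k => ∏ t ∈ Finset.Ico k (N-1), (Polynomial.X + Polynomial.C (a + b + t)) with hP
  have hPmonic : ∀ k, (P k).Monic := fun k =>
    Polynomial.monic_prod_of_monic _ _ (fun t _ => Polynomial.monic_X_add_C _)
  have hPdeg : ∀ k, (P k).natDegree = N - 1 - k := by
    intro k
    rw [hP, Polynomial.natDegree_prod_of_monic _ _ (fun t _ => Polynomial.monic_X_add_C _),
      Finset.sum_congr rfl (fun t _ => Polynomial.natDegree_X_add_C _)]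
    simp [Nat.card_Ico]
  have hPeval : ∀ (k : ℕ) (x : ℝ), (P k).eval x = ∏ t ∈ Finset.Ico k (N-1), (x + (a + b + t)) := by
    intro k x
    rw [hP, Polynomial.eval_prod]
    exact Finset.prod_congr rfl (fun t _ => by simp)
  set Q : Matrix (Fin N) (Fin N) ℝ :=
    Matrix.of (fun i j : Fin N => (P (i:ℕ)).eval ((j:ℕ):ℝ)) with hQ
  have hKQ : K = Matrix.of (fun i j : Fin N =>
      (Real.Gamma (a + b + ((N-1:ℕ):ℝ) + (j:ℕ)))⁻¹ * Q i j) := by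
    ext i j
    have hx : (0:ℝ) < a + b + (j:ℕ) := by positivity
    have hgam := gamma_prod_Ico hx (show (i:ℕ) ≤ N - 1 by have := i.2; omega)
    have h1 : (0:ℝ) < Real.Gamma (a + b + (i:ℕ) + (j:ℕ)) := by
      apply Real.Gamma_pos_of_pos; positivity
    have h2 : (0:ℝ) < Real.Gamma (a + b + ((N-1:ℕ):ℝ) + (j:ℕ)) := by
      apply Real.Gamma_pos_of_pos; positivity
    simp only [hK, hQ, Matrix.of_apply, hPeval]
    rw [show a + b + ((N-1:ℕ):ℝ) + (j:ℕ) = a + b + (j:ℕ) + ((N-1:ℕ):ℝ) by ring] at h2 ⊢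
    rw [hgam] at h2 ⊢
    rw [show a + b + (i:ℕ) + (j:ℕ) = a + b + (j:ℕ) + (i:ℕ) by ring]
    rw [mul_inv]
    have h3 : (0:ℝ) < Real.Gamma (a + b + (j:ℕ) + (i:ℕ)) := by
      apply Real.Gamma_pos_of_pos; positivity
    have h4 : ∏ t ∈ Finset.Ico (i:ℕ) (N-1), (a + b + (j:ℕ) + t)
        = ∏ t ∈ Finset.Ico (i:ℕ) (N-1), (((j:ℕ):ℝ) + (a + b + t)) := by
      exact Finset.prod_congr rfl (fun t _ => by ring)
    rw [h4]
    have h5 : (0:ℝ) < ∏ t ∈ Finset.Ico (i:ℕ) (N-1), (((j:ℕ):ℝ) + (a + b + t)) := by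
      apply Finset.prod_pos; intro t _; positivity
    field_simp
  have hdetK : K.det = (∏ j : Fin N, (Real.Gamma (a + b + ((N-1:ℕ):ℝ) + (j:ℕ)))⁻¹) * Q.det := by
    rw [hKQ]
    exact Matrix.det_mul_row _ _
  -- determinant of Q via Vandermonde
  have hdetQ : Q.det = ∏ i : Fin N, ∏ j ∈ Finset.Ioi i, (((i:ℕ):ℝ) - ((j:ℕ):ℝ)) := by
    have e1 : Q.det = ((Q.submatrix Fin.revPerm Fin.revPerm)).det :=
      (Matrix.det_submatrix_equiv_self Fin.revPerm Q).symm
    have e2 : (Q.submatrix Fin.revPerm Fin.revPerm) =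
        (Matrix.of (fun i j : Fin N => (P ((Fin.rev j : Fin N):ℕ)).eval (((Fin.rev i : Fin N):ℕ):ℝ))).transpose := by
      ext i j
      simp [hQ, Matrix.submatrix_apply, Matrix.transpose_apply, Fin.revPerm_apply]
    rw [e1, e2, Matrix.det_transpose,
      ← Matrix.det_eval_matrixOfPolynomials_eq_det_vandermonde
        (fun i : Fin N => (((Fin.rev i : Fin N):ℕ):ℝ)) (fun j : Fin N => P ((Fin.rev j : Fin N):ℕ))
        (fun j => by rw [hPdeg, rev_val]; have := j.2; omega)
        (fun j => hPmonic _),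
      Matrix.det_vandermonde]
    refine Finset.prod_congr rfl (fun i _ => Finset.prod_congr rfl (fun j hj => ?_))
    rw [rev_val, rev_val]
    have hi : (i:ℕ) ≤ N - 1 := by have := i.2; omega
    have hj' : (j:ℕ) ≤ N - 1 := by have := j.2; omega
    rw [Nat.cast_sub hi, Nat.cast_sub hj']
    ring
  -- evaluate the double product
  have hE : (∏ i : Fin N, ∏ j ∈ Finset.Ioi i, (((i:ℕ):ℝ) - ((j:ℕ):ℝ)))
      = (∏ i : Fin N, (-1:ℝ) ^ (i:ℕ)) * ∏ i : Fin N, (((i:ℕ).factorial : ℝ)) := by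
    have step : ∀ i : Fin N, ∏ j ∈ Finset.Ioi i, (((i:ℕ):ℝ) - ((j:ℕ):ℝ))
        = (-1:ℝ) ^ (N - 1 - (i:ℕ)) * ((N - 1 - (i:ℕ)).factorial : ℝ) := by
      intro i
      have : ∀ j ∈ Finset.Ioi i, (((i:ℕ):ℝ) - ((j:ℕ):ℝ)) = (-1) * (((j:ℕ):ℝ) - ((i:ℕ):ℝ)) :=
        fun j _ => by ring
      rw [Finset.prod_congr rfl this, Finset.prod_mul_distrib, Finset.prod_const,
        Fin.card_Ioi, prod_Ioi_real]
    rw [Finset.prod_congr rfl (fun i _ => step i), Finset.prod_mul_distrib,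
      rev_prod_eq N (fun k => (-1:ℝ)^k), rev_prod_eq N (fun k => ((k.factorial : ℕ):ℝ))]
  -- assemble
  have hfin : ∀ f : ℕ → ℝ, ∏ i : Fin N, f (i:ℕ) = ∏ k ∈ Finset.range N, f k :=
    fun f => Fin.prod_univ_eq_prod_range f N
  have hs : (∏ k ∈ Finset.range N, (-1:ℝ) ^ k) * (∏ k ∈ Finset.range N, (-1:ℝ) ^ k) = 1 := by
    rw [← Finset.prod_mul_distrib]
    refine Finset.prod_eq_one (fun k _ => ?_)
    rw [← pow_add]
    exact Even.neg_one_pow ⟨k, rfl⟩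
  have hdetH : H.det = (∏ i : Fin N, (-1:ℝ) ^ (i:ℕ)) * M2.det := by
    have hdm := congrArg Matrix.det hmul
    rw [Matrix.det_mul, hdetL] at hdm
    have hs' : (∏ i : Fin N, (-1:ℝ) ^ (i:ℕ)) * (∏ i : Fin N, (-1:ℝ) ^ (i:ℕ)) = 1 := by
      rw [hfin (fun k => (-1:ℝ) ^ k)]; exact hs
    calc H.det = 1 * H.det := (one_mul _).symm
      _ = (∏ i : Fin N, (-1:ℝ) ^ (i:ℕ)) * ((∏ i : Fin N, (-1:ℝ) ^ (i:ℕ)) * H.det) := by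
          rw [← mul_assoc, hs']
      _ = (∏ i : Fin N, (-1:ℝ) ^ (i:ℕ)) * M2.det := by rw [hdm]
  rw [hdetH, hdetM2, hdetK, hdetQ, hE]
  rw [hfin (fun k => (-1:ℝ) ^ k), hfin (fun k => Real.Gamma (b + k)),
    hfin (fun k => Real.Gamma (a + k)),
    hfin (fun k => (Real.Gamma (a + b + ((N-1:ℕ):ℝ) + k))⁻¹),
    hfin (fun k => ((k.factorial : ℕ) : ℝ))]
  have hring : ∀ s gb ga gi f : ℝ, s * (gb * (ga * (gi * (s * f)))) = s * s * (f * (ga * gb * gi)) :=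
    fun _ _ _ _ _ => by ring
  rw [hring, hs, one_mul, ← Finset.prod_mul_distrib, ← Finset.prod_mul_distrib,
    ← Finset.prod_mul_distrib]
  refine Finset.prod_congr rfl (fun k _ => ?_)
  rw [div_eq_mul_inv]



lemma indicator_pi_prod (N : ℕ) (f : Fin N → ℝ → ℝ) :
    (Set.univ.pi fun _ : Fin N => Set.Icc (0:ℝ) 1).indicator (fun x => ∏ i, f i (x i))
      = fun x => ∏ i, (Set.Icc (0:ℝ) 1).indicator (f i) (x i) := by
  funext x
  by_cases hx : x ∈ Set.univ.pi fun _ : Fin N => Set.Icc (0:ℝ) 1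
  · rw [Set.indicator_of_mem hx]
    exact Finset.prod_congr rfl fun i _ =>
      (Set.indicator_of_mem (hx i (Set.mem_univ i)) _).symm
  · rw [Set.indicator_of_notMem hx]
    have : ∃ i, x i ∉ Set.Icc (0:ℝ) 1 := by
      by_contra hcon
      push_neg at hcon
      exact hx (fun i _ => hcon i)
    obtain ⟨i, hi⟩ := this
    exact (Finset.prod_eq_zero (Finset.mem_univ i)
      (by rw [Set.indicator_of_notMem hi])).symm

lemma perm_pow_prod {N : ℕ} (x : Fin N → ℝ) (σ : Equiv.Perm (Fin N)) :
    ∏ i, x (σ i) ^ (i : ℕ) = ∏ i, x i ^ ((σ⁻¹ i : Fin N) : ℕ) := by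
  rw [← Equiv.prod_comp σ (fun i => x i ^ ((σ⁻¹ i : Fin N) : ℕ))]
  exact Finset.prod_congr rfl fun i _ => by rw [show σ⁻¹ (σ i) = i from σ.symm_apply_apply i]

lemma sign_sq (N : ℕ) (σ : Equiv.Perm (Fin N)) :
    ((Equiv.Perm.sign σ : ℤ) : ℝ) * ((Equiv.Perm.sign σ : ℤ) : ℝ) = 1 := by
  rcases Int.units_eq_one_or (Equiv.Perm.sign σ) with h | h <;> simp [h]

/-- algebraic permutation-sum to determinant -/
lemma perm_sum_det (N : ℕ) (mm : ℕ → ℝ) :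
    ∑ σ : Equiv.Perm (Fin N), ∑ τ : Equiv.Perm (Fin N),
        ((Equiv.Perm.sign σ : ℤ) : ℝ) * ((Equiv.Perm.sign τ : ℤ) : ℝ) *
          ∏ i, mm (((σ⁻¹ i : Fin N) : ℕ) + ((τ⁻¹ i : Fin N) : ℕ))
      = (N.factorial : ℝ) * Matrix.det (Matrix.of fun i j : Fin N => mm ((i:ℕ) + (j:ℕ))) := by
  have hdet : Matrix.det (Matrix.of fun i j : Fin N => mm ((i:ℕ) + (j:ℕ)))
      = ∑ π : Equiv.Perm (Fin N), ((Equiv.Perm.sign π : ℤ) : ℝ) *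
          ∏ i : Fin N, mm (((π i : Fin N) : ℕ) + (i : ℕ)) := by
    rw [Matrix.det_apply']
    rfl
  have hinner : ∀ σ : Equiv.Perm (Fin N),
      (∑ τ : Equiv.Perm (Fin N),
        ((Equiv.Perm.sign σ : ℤ) : ℝ) * ((Equiv.Perm.sign τ : ℤ) : ℝ) *
          ∏ i, mm (((σ⁻¹ i : Fin N) : ℕ) + ((τ⁻¹ i : Fin N) : ℕ)))
      = ∑ π : Equiv.Perm (Fin N), ((Equiv.Perm.sign π : ℤ) : ℝ) *
          ∏ i : Fin N, mm (((π i : Fin N) : ℕ) + (i : ℕ)) := by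
    intro σ
    rw [← Equiv.sum_comp ((Equiv.inv (Equiv.Perm (Fin N))).trans (Equiv.mulLeft σ)) (fun τ => ((Equiv.Perm.sign σ : ℤ) : ℝ) * ((Equiv.Perm.sign τ : ℤ) : ℝ) *
          ∏ i, mm (((σ⁻¹ i : Fin N) : ℕ) + ((τ⁻¹ i : Fin N) : ℕ)))]
    refine Finset.sum_congr rfl (fun π _ => ?_)
    have he : ((Equiv.inv (Equiv.Perm (Fin N))).trans (Equiv.mulLeft σ)) π = σ * π⁻¹ := rfl
    have hsign : ((Equiv.Perm.sign (σ * π⁻¹) : ℤ) : ℝ)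
        = ((Equiv.Perm.sign σ : ℤ) : ℝ) * ((Equiv.Perm.sign π : ℤ) : ℝ) := by
      rw [map_mul, Equiv.Perm.sign_inv]
      push_cast
      ring
    have hprod : ∏ i, mm (((σ⁻¹ i : Fin N) : ℕ) + (((σ * π⁻¹)⁻¹ i : Fin N) : ℕ))
        = ∏ i : Fin N, mm (((π i : Fin N) : ℕ) + (i : ℕ)) := by
      rw [← Equiv.prod_comp σ⁻¹ (fun j : Fin N => mm (((π j : Fin N) : ℕ) + (j : ℕ)))]
      refine Finset.prod_congr rfl (fun i _ => ?_)
      have h1 : (σ * π⁻¹)⁻¹ i = π (σ⁻¹ i) := by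
        simp [mul_inv_rev, Equiv.Perm.mul_apply]
      rw [h1]
      rw [Nat.add_comm]
    rw [he, hsign, hprod,
      show ∀ s t P : ℝ, s * (s * t) * P = s * s * (t * P) from fun _ _ _ => by ring,
      sign_sq N σ, one_mul]
  rw [Finset.sum_congr rfl (fun σ _ => hinner σ), Finset.sum_const, hdet]
  simp [Finset.card_univ, Fintype.card_perm, Fintype.card_fin, smul_eq_mul]

theorem expand_main (N : ℕ) (w : ℝ → ℝ) (mm : ℕ → ℝ)
    (hint : ∀ e : ℕ, IntegrableOn (fun t => t ^ e * w t) (Set.Icc (0:ℝ) 1))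
    (hval : ∀ e : ℕ, ∫ t in Set.Icc (0:ℝ) 1, t ^ e * w t = mm e) :
    (∫ x in Set.univ.pi fun _ : Fin N => Set.Icc (0:ℝ) 1,
        (∏ i, w (x i)) * ∏ i : Fin N, ∏ j ∈ Finset.Ioi i, (x i - x j) ^ 2)
      = (N.factorial : ℝ) * Matrix.det (Matrix.of fun i j : Fin N => mm ((i:ℕ) + (j:ℕ))) := by
  classical
  set S : Set (Fin N → ℝ) := Set.univ.pi fun _ : Fin N => Set.Icc (0:ℝ) 1 with hSdef
  have hS : MeasurableSet S := MeasurableSet.univ_pi (fun i => measurableSet_Icc)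
  set f : ℕ → ℝ → ℝ := fun e t => t ^ e * w t with hf
  set g : ℕ → ℝ → ℝ := fun e => (Set.Icc (0:ℝ) 1).indicator (f e) with hg
  have gint : ∀ e, Integrable (g e) :=
    fun e => (integrable_indicator_iff measurableSet_Icc).mpr (hint e)
  have gval : ∀ e, ∫ t, g e t = mm e := by
    intro e
    rw [hg, integral_indicator measurableSet_Icc]
    exact hval e
  -- pointwise expansion
  have hGexp : ∀ x : Fin N → ℝ,
      (∏ i, w (x i)) * ∏ i : Fin N, ∏ j ∈ Finset.Ioi i, (x i - x j) ^ 2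
        = ∑ p ∈ (Finset.univ ×ˢ Finset.univ :
            Finset (Equiv.Perm (Fin N) × Equiv.Perm (Fin N))),
            ((Equiv.Perm.sign p.1 : ℤ) : ℝ) * ((Equiv.Perm.sign p.2 : ℤ) : ℝ) *
              ∏ i, f (((p.1⁻¹ i : Fin N) : ℕ) + ((p.2⁻¹ i : Fin N) : ℕ)) (x i) := by
    intro x
    have h1 : ∏ i : Fin N, ∏ j ∈ Finset.Ioi i, (x i - x j) ^ 2
        = (Matrix.vandermonde x).det ^ 2 := by
      rw [Matrix.det_vandermonde]
      rw [← Finset.prod_pow]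
      refine Finset.prod_congr rfl (fun i _ => ?_)
      rw [← Finset.prod_pow]
      exact Finset.prod_congr rfl (fun j _ => by ring)
    have h2 : (Matrix.vandermonde x).det
        = ∑ σ : Equiv.Perm (Fin N), ((Equiv.Perm.sign σ : ℤ) : ℝ) *
            ∏ i, x i ^ ((σ⁻¹ i : Fin N) : ℕ) := by
      rw [Matrix.det_apply']
      refine Finset.sum_congr rfl (fun σ _ => ?_)
      rw [show ∏ i, Matrix.vandermonde x (σ i) i = ∏ i, x (σ i) ^ (i : ℕ) from
        Finset.prod_congr rfl (fun i _ => rfl), perm_pow_prod]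
    rw [h1, h2, sq, Finset.sum_mul_sum]
    simp only [Finset.mul_sum]
    rw [← Finset.sum_product']
    refine Finset.sum_congr rfl (fun p _ => ?_)
    have hA : ∀ σ τ : Equiv.Perm (Fin N),
        (∏ i, x i ^ ((σ⁻¹ i : Fin N) : ℕ)) * (∏ i, x i ^ ((τ⁻¹ i : Fin N) : ℕ)) *
            (∏ i, w (x i))
          = ∏ i, f (((σ⁻¹ i : Fin N) : ℕ) + ((τ⁻¹ i : Fin N) : ℕ)) (x i) := by
      intro σ τ
      rw [← Finset.prod_mul_distrib, ← Finset.prod_mul_distrib]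
      refine Finset.prod_congr rfl (fun i _ => ?_)
      rw [hf]
      dsimp only
      rw [pow_add]
    rw [← hA p.1 p.2]
    ring
  -- integrate term by term
  have hterm_int : ∀ p : Equiv.Perm (Fin N) × Equiv.Perm (Fin N),
      Integrable (fun x : Fin N → ℝ =>
        ((Equiv.Perm.sign p.1 : ℤ) : ℝ) * ((Equiv.Perm.sign p.2 : ℤ) : ℝ) *
          ∏ i, f (((p.1⁻¹ i : Fin N) : ℕ) + ((p.2⁻¹ i : Fin N) : ℕ)) (x i))
        (volume.restrict S) := by
    intro p
    apply Integrable.const_mul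
    have hind : Integrable (S.indicator (fun x : Fin N → ℝ =>
        ∏ i, f (((p.1⁻¹ i : Fin N) : ℕ) + ((p.2⁻¹ i : Fin N) : ℕ)) (x i))) volume := by
      rw [show S.indicator (fun x : Fin N → ℝ =>
          ∏ i, f (((p.1⁻¹ i : Fin N) : ℕ) + ((p.2⁻¹ i : Fin N) : ℕ)) (x i))
        = fun x => ∏ i, g (((p.1⁻¹ i : Fin N) : ℕ) + ((p.2⁻¹ i : Fin N) : ℕ)) (x i) from
        indicator_pi_prod N _]
      exact Integrable.fintype_prod (fun i => gint _)
    exact (integrable_indicator_iff hS).mp hind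
  have hterm_val : ∀ p : Equiv.Perm (Fin N) × Equiv.Perm (Fin N),
      (∫ x in S, ((Equiv.Perm.sign p.1 : ℤ) : ℝ) * ((Equiv.Perm.sign p.2 : ℤ) : ℝ) *
          ∏ i, f (((p.1⁻¹ i : Fin N) : ℕ) + ((p.2⁻¹ i : Fin N) : ℕ)) (x i))
        = ((Equiv.Perm.sign p.1 : ℤ) : ℝ) * ((Equiv.Perm.sign p.2 : ℤ) : ℝ) *
          ∏ i, mm (((p.1⁻¹ i : Fin N) : ℕ) + ((p.2⁻¹ i : Fin N) : ℕ)) := by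
    intro p
    rw [MeasureTheory.integral_const_mul]
    congr 1
    rw [← integral_indicator hS]
    rw [show S.indicator (fun x : Fin N → ℝ =>
        ∏ i, f (((p.1⁻¹ i : Fin N) : ℕ) + ((p.2⁻¹ i : Fin N) : ℕ)) (x i))
      = fun x => ∏ i, g (((p.1⁻¹ i : Fin N) : ℕ) + ((p.2⁻¹ i : Fin N) : ℕ)) (x i) from
      indicator_pi_prod N _]
    rw [MeasureTheory.integral_fintype_prod_volume_eq_prod (ι := Fin N)
      (f := fun i t => g (((p.1⁻¹ i : Fin N) : ℕ) + ((p.2⁻¹ i : Fin N) : ℕ)) t)]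
    exact Finset.prod_congr rfl (fun i _ => gval _)
  calc (∫ x in S, (∏ i, w (x i)) * ∏ i : Fin N, ∏ j ∈ Finset.Ioi i, (x i - x j) ^ 2)
      = ∫ x in S, ∑ p ∈ (Finset.univ ×ˢ Finset.univ :
            Finset (Equiv.Perm (Fin N) × Equiv.Perm (Fin N))),
            ((Equiv.Perm.sign p.1 : ℤ) : ℝ) * ((Equiv.Perm.sign p.2 : ℤ) : ℝ) *
              ∏ i, f (((p.1⁻¹ i : Fin N) : ℕ) + ((p.2⁻¹ i : Fin N) : ℕ)) (x i) := by
        exact integral_congr_ae (Filter.Eventually.of_forall (fun x => hGexp x))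
    _ = ∑ p ∈ (Finset.univ ×ˢ Finset.univ :
            Finset (Equiv.Perm (Fin N) × Equiv.Perm (Fin N))),
          ∫ x in S, ((Equiv.Perm.sign p.1 : ℤ) : ℝ) * ((Equiv.Perm.sign p.2 : ℤ) : ℝ) *
              ∏ i, f (((p.1⁻¹ i : Fin N) : ℕ) + ((p.2⁻¹ i : Fin N) : ℕ)) (x i) := by
        exact integral_finset_sum _ (fun p _ => hterm_int p)
    _ = ∑ p ∈ (Finset.univ ×ˢ Finset.univ :
            Finset (Equiv.Perm (Fin N) × Equiv.Perm (Fin N))),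
          ((Equiv.Perm.sign p.1 : ℤ) : ℝ) * ((Equiv.Perm.sign p.2 : ℤ) : ℝ) *
            ∏ i, mm (((p.1⁻¹ i : Fin N) : ℕ) + ((p.2⁻¹ i : Fin N) : ℕ)) := by
        exact Finset.sum_congr rfl (fun p _ => hterm_val p)
    _ = (N.factorial : ℝ) * Matrix.det (Matrix.of fun i j : Fin N => mm ((i:ℕ) + (j:ℕ))) := by
        rw [Finset.sum_product]
        exact perm_sum_det N mm



/-- The Selberg integral at τ = 1. -/
theorem selberg_integral_tau_one (N : ℕ) (hN : 1 ≤ N) (α₁ α₂ : ℝ) (h1 : 0 < α₁) (h2 : 0 < α₂) :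
    (∫ x in Set.univ.pi fun _ : Fin N => Set.Icc (0:ℝ) 1,
        (∏ i : Fin N, x i ^ (α₁ - 1) * (1 - x i) ^ (α₂ - 1)) *
          ∏ i : Fin N, ∏ j ∈ Finset.Ioi i, (x i - x j) ^ 2) =
      ∏ j ∈ Finset.range N,
        Real.Gamma (α₁ + j) * Real.Gamma (α₂ + j) * Real.Gamma (2 + j) /
          Real.Gamma (α₁ + α₂ + N + j - 1) := by
  have hint : ∀ e : ℕ, IntegrableOn (fun t => t ^ e * wfn α₁ α₂ t) (Set.Icc (0:ℝ) 1) := by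
    intro e
    have h := moment_integrableOn_Icc h1 h2 e 0
    exact h.congr_fun (fun t _ => by simp) measurableSet_Icc
  have hval : ∀ e : ℕ, ∫ t in Set.Icc (0:ℝ) 1, t ^ e * wfn α₁ α₂ t = Bet (α₁ + e) α₂ := by
    intro e
    rw [setIntegral_congr_set (Ioo_ae_eq_Icc (a := (0:ℝ)) (b := (1:ℝ))).symm]
    simpa using moment_value h1 h2 e 0
  have key := expand_main N (wfn α₁ α₂) (fun e => Bet (α₁ + e) α₂) hint hval
  have hlhs : (∫ x in Set.univ.pi fun _ : Fin N => Set.Icc (0:ℝ) 1,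
        (∏ i : Fin N, x i ^ (α₁ - 1) * (1 - x i) ^ (α₂ - 1)) *
          ∏ i : Fin N, ∏ j ∈ Finset.Ioi i, (x i - x j) ^ 2)
      = (∫ x in Set.univ.pi fun _ : Fin N => Set.Icc (0:ℝ) 1,
        (∏ i : Fin N, wfn α₁ α₂ (x i)) *
          ∏ i : Fin N, ∏ j ∈ Finset.Ioi i, (x i - x j) ^ 2) := rfl
  rw [hlhs, key]
  have hMeq : (Matrix.of fun i j : Fin N => Bet (α₁ + (((i:ℕ) + (j:ℕ) : ℕ) : ℝ)) α₂)
      = (Matrix.of fun i j : Fin N => Bet (α₁ + (((i:ℕ):ℝ) + ((j:ℕ):ℝ))) α₂) := by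
    ext i j
    simp only [Matrix.of_apply]
    rw [Nat.cast_add]
  have hdet := hankel_det h1 h2 N hN
  rw [show (Matrix.of fun i j : Fin N => (fun e : ℕ => Bet (α₁ + e) α₂) ((i:ℕ) + (j:ℕ)))
      = Matrix.of fun i j : Fin N => Bet (α₁ + (((i:ℕ):ℝ) + ((j:ℕ):ℝ))) α₂ from hMeq, hdet]
  -- final arithmetic
  have hGam2 : ∀ j : ℕ, Real.Gamma (2 + (j:ℝ)) = (((j+1).factorial : ℕ) : ℝ) := by
    intro j
    rw [show (2 + (j:ℝ)) = (((j+1 : ℕ)):ℝ) + 1 by push_cast; ring,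
      Real.Gamma_nat_eq_factorial]
  have hargs : ∀ k : ℕ, α₁ + α₂ + ((N-1:ℕ):ℝ) + k = α₁ + α₂ + N + k - 1 := by
    intro k
    rw [Nat.cast_sub hN]
    push_cast
    ring
  have hrhs : ∀ k : ℕ, Real.Gamma (α₁ + k) * Real.Gamma (α₂ + k) * Real.Gamma (2 + k) /
        Real.Gamma (α₁ + α₂ + N + k - 1)
      = (((k+1).factorial : ℕ) : ℝ) *
        (Real.Gamma (α₁ + k) * Real.Gamma (α₂ + k) / Real.Gamma (α₁ + α₂ + ((N-1:ℕ):ℝ) + k)) := by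
    intro k
    rw [hGam2 k, hargs k]
    ring
  rw [Finset.prod_congr rfl (fun k _ => hrhs k)]
  rw [Finset.prod_mul_distrib, Finset.prod_mul_distrib]
  rw [← mul_assoc, ← Nat.cast_prod, ← Nat.cast_prod, ← Nat.cast_mul]
  congr 2
  rw [Nat.prod_range_factorial_succ, ← Nat.prod_range_succ_factorial N,
    Finset.prod_range_succ, mul_comm]
end

section
/- The normalization constant of the Laguerre Muttalib–Borodin ensemble: ∫_{(0,∞)^N} ∏_{1≤i<j≤N}(x_j-x_i)(x_j^θ - x_i^θ) ∏_{k=1}^N x_k^a e^{-x_k} dx = θ^{N(N-1)/2} ∏_{l=1}^N Γ(θ(l-1)+a+1)Γ(l+1), for θ > 0 and a > -1. -/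
open MeasureTheory

lemma integrable_pi_prod {n : ℕ} (μ : Measure ℝ) [SigmaFinite μ] (f : Fin n → ℝ → ℝ)
    (hf : ∀ i, Integrable (f i) μ) :
    Integrable (fun x : Fin n → ℝ => ∏ i, f i (x i)) (Measure.pi fun _ => μ) := by
  induction n with
  | zero =>
      simp [integrable_const_iff]
      rw [Measure.pi_of_empty]
      infer_instance
  | succ n ih =>
      have h := ((measurePreserving_piFinSuccAbove (fun _ : Fin (n+1) => μ) 0).symm)
      rw [← h.integrable_comp_emb (MeasurableEquiv.measurableEmbedding _)]
      simp_rw [MeasurableEquiv.piFinSuccAbove_symm_apply, Fin.insertNthEquiv,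
        Fin.prod_univ_succ, Fin.insertNth_zero]
      simp only [Fin.zero_succAbove, Function.comp_def, Fin.cons_zero, Fin.cons_succ]
      have h2 : Integrable (fun (x : Fin n → ℝ) ↦ ∏ j, f (Fin.succ j) (x j))
          (Measure.pi fun _ => μ) := ih _ (fun i ↦ hf _)
      exact Integrable.mul_prod (hf 0) h2

lemma integral_pi_prod {n : ℕ} (μ : Measure ℝ) [SigmaFinite μ] (f : Fin n → ℝ → ℝ) :
    ∫ x : Fin n → ℝ, ∏ i, f i (x i) ∂(Measure.pi fun _ => μ) = ∏ i, ∫ x, f i x ∂μ := by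
  induction n with
  | zero =>
      simp
      rw [Measure.pi_of_empty]
      simp
  | succ n ih =>
      calc
        _ = ∫ x : ℝ × (Fin n → ℝ),
            f 0 x.1 * ∏ i : Fin n, f (Fin.succ i) (x.2 i) ∂(μ.prod (Measure.pi fun _ => μ)) := by
          rw [← ((measurePreserving_piFinSuccAbove
            (fun _ : Fin (n+1) => μ) 0).symm).integral_comp']
          have he : ∀ x : ℝ × (Fin n → ℝ),
              ∏ i, f i ((MeasurableEquiv.piFinSuccAbove (fun _ : Fin (n+1) => ℝ) 0).symm x i) =
              f 0 x.1 * ∏ i : Fin n, f i.succ (x.2 i) := fun x => by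
            simp [MeasurableEquiv.piFinSuccAbove_symm_apply, Fin.prod_univ_succ,
              Fin.zero_succAbove, Fin.insertNthEquiv, Fin.insertNth_zero]
          simp_rw [he]
        _ = (∫ x, f 0 x ∂μ) * ∏ i : Fin n, ∫ x, f (Fin.succ i) x ∂μ := by
          rw [← ih, integral_prod_mul (f := f 0) (g := fun y : Fin n → ℝ => ∏ i, f (Fin.succ i) (y i))]
        _ = ∏ i, ∫ x, f i x ∂μ := by rw [Fin.prod_univ_succ]


lemma pi_restrict_Ioi (n : ℕ) :
    (volume : Measure (Fin n → ℝ)).restrict (Set.univ.pi fun _ => Set.Ioi (0:ℝ)) =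
      Measure.pi fun _ => (volume : Measure ℝ).restrict (Set.Ioi 0) := by
  refine (Measure.pi_eq fun s hs => ?_).symm
  rw [Measure.restrict_apply (MeasurableSet.univ_pi hs), ← Set.pi_inter_distrib]
  rw [volume_pi, Measure.pi_pi]
  exact Finset.prod_congr rfl fun i _ => (Measure.restrict_apply (hs i)).symm

open Equiv in
lemma andreief {n : ℕ} (μ : Measure ℝ) [SigmaFinite μ] (f g : Fin n → ℝ → ℝ)
    (hint : ∀ i j, Integrable (fun x => f i x * g j x) μ) :
    ∫ x : Fin n → ℝ, (Matrix.det (Matrix.of fun i k => f i (x k))) *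
        (Matrix.det (Matrix.of fun j k => g j (x k))) ∂(Measure.pi fun _ => μ)
      = (n.factorial : ℝ) * Matrix.det (Matrix.of fun i j => ∫ x, f i x * g j x ∂μ) := by
  have key : ∀ x : Fin n → ℝ,
      (Matrix.det (Matrix.of fun i k => f i (x k))) *
        (Matrix.det (Matrix.of fun j k => g j (x k)))
      = ∑ σ : Perm (Fin n), ∑ τ : Perm (Fin n),
          (((Perm.sign σ : ℤ) : ℝ) * ((Perm.sign τ : ℤ) : ℝ)) *
            ∏ k, (f (σ k) (x k) * g (τ k) (x k)) := by
    intro x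
    rw [Matrix.det_apply', Matrix.det_apply', Finset.sum_mul_sum]
    refine Finset.sum_congr rfl fun σ _ => Finset.sum_congr rfl fun τ _ => ?_
    simp only [Matrix.of_apply]
    rw [Finset.prod_mul_distrib]
    ring
  simp_rw [key]
  have hterm : ∀ σ τ : Perm (Fin n),
      Integrable (fun x : Fin n → ℝ =>
        (((Perm.sign σ : ℤ) : ℝ) * ((Perm.sign τ : ℤ) : ℝ)) *
          ∏ k, (f (σ k) (x k) * g (τ k) (x k))) (Measure.pi fun _ => μ) := fun σ τ =>
    (integrable_pi_prod μ _ (fun k => hint _ _)).const_mul _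
  rw [integral_finset_sum _ fun σ _ => integrable_finset_sum _ fun τ _ => hterm σ τ]
  have h2 : ∀ σ : Perm (Fin n),
      (∫ x : Fin n → ℝ, ∑ τ : Perm (Fin n),
          (((Perm.sign σ : ℤ) : ℝ) * ((Perm.sign τ : ℤ) : ℝ)) *
            ∏ k, (f (σ k) (x k) * g (τ k) (x k)) ∂(Measure.pi fun _ => μ))
        = ∑ τ : Perm (Fin n), (((Perm.sign σ : ℤ) : ℝ) * ((Perm.sign τ : ℤ) : ℝ)) *
            ∏ k, ∫ x, f (σ k) x * g (τ k) x ∂μ := by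
    intro σ
    rw [integral_finset_sum _ fun τ _ => hterm σ τ]
    refine Finset.sum_congr rfl fun τ _ => ?_
    rw [integral_const_mul, integral_pi_prod μ (fun k => fun x => f (σ k) x * g (τ k) x)]
  simp_rw [h2]
  have h3 : ∀ σ : Perm (Fin n),
      (∑ τ : Perm (Fin n), (((Perm.sign σ : ℤ) : ℝ) * ((Perm.sign τ : ℤ) : ℝ)) *
          ∏ k, ∫ x, f (σ k) x * g (τ k) x ∂μ)
        = Matrix.det (Matrix.of fun i j => ∫ x, f i x * g j x ∂μ) := by
    intro σ
    rw [← Matrix.det_transpose, Matrix.det_apply']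
    rw [← Equiv.sum_comp (Equiv.mulRight σ)
      (fun τ : Perm (Fin n) => (((Perm.sign σ : ℤ) : ℝ) * ((Perm.sign τ : ℤ) : ℝ)) *
          ∏ k, ∫ x, f (σ k) x * g (τ k) x ∂μ)]
    refine Finset.sum_congr rfl fun ρ _ => ?_
    have hs : ((Perm.sign σ : ℤ) : ℝ) * ((Perm.sign σ : ℤ) : ℝ) = 1 := by
      rcases Int.units_eq_one_or (Perm.sign σ) with h | h <;> simp [h]
    have hsign : ((Perm.sign σ : ℤ) : ℝ) * ((Perm.sign (Equiv.mulRight σ ρ) : ℤ) : ℝ)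
        = ((Perm.sign ρ : ℤ) : ℝ) := by
      simp only [Equiv.coe_mulRight, Equiv.Perm.sign_mul]
      push_cast
      calc ((Perm.sign σ : ℤ) : ℝ) * (((Perm.sign ρ : ℤ) : ℝ) * ((Perm.sign σ : ℤ) : ℝ))
          = (((Perm.sign σ : ℤ) : ℝ) * ((Perm.sign σ : ℤ) : ℝ)) * ((Perm.sign ρ : ℤ) : ℝ) := by
            ring
        _ = ((Perm.sign ρ : ℤ) : ℝ) := by rw [hs, one_mul]
    rw [hsign]
    have hprod : (∏ k, ∫ x, f (σ k) x * g ((Equiv.mulRight σ ρ) k) x ∂μ)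
        = ∏ k, ∫ x, f k x * g (ρ k) x ∂μ := by
      simp only [Equiv.coe_mulRight, Equiv.Perm.mul_apply]
      exact Equiv.prod_comp σ (fun k => ∫ x, f k x * g (ρ k) x ∂μ)
    rw [hprod]
    simp only [Matrix.transpose_apply, Matrix.of_apply]
  simp_rw [h3]
  rw [Finset.sum_const, Finset.card_univ, Fintype.card_perm, Fintype.card_fin, nsmul_eq_mul]


lemma gamma_poch (c : ℝ) (hc : 0 < c) (i : ℕ) :
    Real.Gamma (c + i) = (ascPochhammer ℝ i).eval c * Real.Gamma c := by
  induction i with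
  | zero => simp
  | succ i ih =>
      have hne : c + i ≠ 0 := by positivity
      have h : c + ((i:ℕ) + 1 : ℕ) = (c + i) + 1 := by push_cast; ring
      rw [h, Real.Gamma_add_one hne, ih, ascPochhammer_succ_eval]
      ring

lemma spos (θ a : ℝ) (hθ : 0 < θ) (ha : -1 < a) (i j : ℕ) :
    (0:ℝ) < (i:ℝ) + (θ * (j:ℝ) + a + 1) := by
  have h1 : (0:ℝ) ≤ θ * j := by positivity
  have h2 : (0:ℝ) ≤ (i:ℝ) := by positivity
  linarith

lemma entry_eq (θ a : ℝ) (hθ : 0 < θ) (ha : -1 < a) (i j : ℕ) :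
    ∀ x ∈ Set.Ioi (0:ℝ),
      (x ^ i * (x ^ a * Real.exp (-x))) * ((x ^ θ) ^ j)
        = Real.exp (-x) * x ^ (((i:ℝ) + (θ * (j:ℝ) + a + 1)) - 1) := by
  intro x hx
  have hx0 : (0:ℝ) < x := hx
  have e1 : x ^ i = x ^ ((i:ℕ):ℝ) := (Real.rpow_natCast x i).symm
  have e2 : (x ^ θ) ^ j = x ^ (θ * (j:ℝ)) := by
    rw [← Real.rpow_natCast (x ^ θ) j, ← Real.rpow_mul hx0.le]
  rw [e1, e2]
  rw [show ((i:ℝ) + (θ * (j:ℝ) + a + 1)) - 1 = ((i:ℕ):ℝ) + a + θ * (j:ℝ) by ring]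
  rw [Real.rpow_add hx0, Real.rpow_add hx0]
  ring

lemma entry_integrable (θ a : ℝ) (hθ : 0 < θ) (ha : -1 < a) (i j : ℕ) :
    Integrable (fun x : ℝ => (x ^ i * (x ^ a * Real.exp (-x))) * ((x ^ θ) ^ j))
      ((volume : Measure ℝ).restrict (Set.Ioi 0)) := by
  have h := Real.GammaIntegral_convergent (spos θ a hθ ha i j)
  refine h.congr ?_
  filter_upwards [ae_restrict_mem measurableSet_Ioi] with x hx
  exact (entry_eq θ a hθ ha i j x hx).symm

lemma entry_val (θ a : ℝ) (hθ : 0 < θ) (ha : -1 < a) (i j : ℕ) :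
    ∫ x, (x ^ i * (x ^ a * Real.exp (-x))) * ((x ^ θ) ^ j)
        ∂((volume : Measure ℝ).restrict (Set.Ioi 0))
      = Real.Gamma ((i:ℝ) + (θ * (j:ℝ) + a + 1)) := by
  rw [Real.Gamma_eq_integral (spos θ a hθ ha i j)]
  exact setIntegral_congr_fun measurableSet_Ioi (entry_eq θ a hθ ha i j)


lemma sum_card_Ioi (n : ℕ) : (∑ i : Fin n, (Finset.Ioi i).card) = n * (n - 1) / 2 := by
  simp only [Fin.card_Ioi]
  rw [Fin.sum_univ_eq_sum_range (fun m => n - 1 - m) n]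
  rw [Finset.sum_range_reflect (fun j => j) n]
  exact Finset.sum_range_id n

lemma prod_Iio_sub (n : ℕ) (j : Fin n) :
    (∏ i ∈ Finset.Iio j, ((j:ℕ) - (i:ℕ))) = (j:ℕ).factorial := by
  have h : (∏ i ∈ Finset.Iio j, ((j:ℕ) - (i:ℕ)))
      = ∏ m ∈ Finset.Iio (j:ℕ), ((j:ℕ) - m) := by
    rw [← Fin.map_valEmbedding_Iio, Finset.prod_map]
    rfl
  rw [h, Nat.Iio_eq_range, ← Finset.prod_range_add_one_eq_factorial]
  rw [← Finset.prod_range_reflect (fun m => m + 1) (j:ℕ)]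
  refine Finset.prod_congr rfl fun m hm => ?_
  rw [Finset.mem_range] at hm
  omega

lemma prod_prod_sub (n : ℕ) :
    (∏ i : Fin n, ∏ j ∈ Finset.Ioi i, ((j:ℕ) - (i:ℕ)))
      = ∏ l ∈ Finset.range n, l.factorial := by
  rw [Finset.prod_comm' (s' := fun j => Finset.Iio j) (t' := Finset.univ) (fun i j => by
    simp only [Finset.mem_univ, Finset.mem_Ioi, Finset.mem_Iio, true_and, and_true])]
  rw [← Fin.prod_univ_eq_prod_range (fun l => l.factorial) n]
  refine Finset.prod_congr rfl fun j _ => ?_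
  exact prod_Iio_sub n j

lemma det_gamma (n : ℕ) (θ a : ℝ) (hθ : 0 < θ) (ha : -1 < a) :
    Matrix.det (Matrix.of fun i j : Fin n => Real.Gamma ((i:ℝ) + (θ * (j:ℝ) + a + 1)))
      = (∏ j : Fin n, Real.Gamma (θ * (j:ℝ) + a + 1)) *
        ∏ i : Fin n, ∏ j ∈ Finset.Ioi i,
          ((θ * (j:ℝ) + a + 1) - (θ * (i:ℝ) + a + 1)) := by
  set c : Fin n → ℝ := fun j => θ * (j:ℝ) + a + 1 with hc
  have hcpos : ∀ j : Fin n, 0 < c j := by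
    intro j
    have h0 : (0:ℝ) ≤ θ * j := by positivity
    simp only [hc]
    linarith
  have step1 : (Matrix.of fun i j : Fin n => Real.Gamma ((i:ℝ) + c j))
      = Matrix.of fun i j : Fin n =>
          Real.Gamma (c j) * (ascPochhammer ℝ (i:ℕ)).eval (c j) := by
    ext i j
    simp only [Matrix.of_apply]
    rw [add_comm ((i:ℕ):ℝ) (c j), gamma_poch (c j) (hcpos j) i, mul_comm]
  rw [step1, Matrix.det_mul_row (fun j => Real.Gamma (c j))
    (fun i j : Fin n => (ascPochhammer ℝ (i:ℕ)).eval (c j))]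
  congr 1
  rw [show (fun i j : Fin n => (ascPochhammer ℝ (i:ℕ)).eval (c j))
      = Matrix.transpose (Matrix.of fun i j : Fin n => (ascPochhammer ℝ (j:ℕ)).eval (c i))
      from rfl, Matrix.det_transpose,
    ← Matrix.det_eval_matrixOfPolynomials_eq_det_vandermonde c
      (fun i => ascPochhammer ℝ (i:ℕ))
      (fun i => ascPochhammer_natDegree (S := ℝ) (i:ℕ))
      (fun i => monic_ascPochhammer (S := ℝ) (i:ℕ)),
    Matrix.det_vandermonde]

/-- Normalisation of the Laguerre Muttalib–Borodin ensemble. -/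
theorem laguerre_MB_normalisation (N : ℕ) (hN : 1 ≤ N) (θ a : ℝ) (hθ : 0 < θ) (ha : -1 < a) :
    (∫ x in Set.univ.pi fun _ : Fin N => Set.Ioi (0:ℝ),
        (∏ i : Fin N, ∏ j ∈ Finset.Ioi i, (x j - x i) * (x j ^ θ - x i ^ θ)) *
          ∏ k : Fin N, x k ^ a * Real.exp (-x k)) =
      θ ^ (N * (N - 1) / 2) *
        ∏ l ∈ Finset.range N, Real.Gamma (θ * l + a + 1) * Real.Gamma (l + 2) := by
  classical
  set μ := (volume : Measure ℝ).restrict (Set.Ioi 0) with hμ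
  set f : Fin N → ℝ → ℝ := fun i x => x ^ (i:ℕ) * (x ^ a * Real.exp (-x)) with hf
  set g : Fin N → ℝ → ℝ := fun j x => (x ^ θ) ^ (j:ℕ) with hg
  have hintegrand : ∀ x : Fin N → ℝ,
      (∏ i : Fin N, ∏ j ∈ Finset.Ioi i, (x j - x i) * (x j ^ θ - x i ^ θ)) *
          ∏ k : Fin N, x k ^ a * Real.exp (-x k)
        = (Matrix.det (Matrix.of fun i k => f i (x k))) *
            (Matrix.det (Matrix.of fun j k => g j (x k))) := by
    intro x
    have hv1 : Matrix.det (Matrix.of fun i k : Fin N => f i (x k))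
        = (∏ k : Fin N, (x k ^ a * Real.exp (-x k))) *
            ∏ i : Fin N, ∏ j ∈ Finset.Ioi i, (x j - x i) := by
      have e : (Matrix.of fun i k : Fin N => f i (x k))
          = Matrix.of fun i k : Fin N => (x k ^ a * Real.exp (-x k)) *
              (Matrix.transpose (Matrix.vandermonde x)) i k := by
        ext i k
        simp only [Matrix.of_apply, hf, Matrix.transpose_apply, Matrix.vandermonde]
        ring
      rw [e, Matrix.det_mul_row (fun k => x k ^ a * Real.exp (-x k)),
        Matrix.det_transpose, Matrix.det_vandermonde]
    have hv2 : Matrix.det (Matrix.of fun j k : Fin N => g j (x k))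
        = ∏ i : Fin N, ∏ j ∈ Finset.Ioi i, (x j ^ θ - x i ^ θ) := by
      have e : (Matrix.of fun j k : Fin N => g j (x k))
          = Matrix.transpose (Matrix.vandermonde (fun k => x k ^ θ)) := by
        ext j k
        simp only [Matrix.of_apply, hg, Matrix.transpose_apply, Matrix.vandermonde]
      rw [e, Matrix.det_transpose, Matrix.det_vandermonde]
    rw [hv1, hv2]
    simp_rw [Finset.prod_mul_distrib]
    ring
  rw [pi_restrict_Ioi N]
  rw [integral_congr_ae (Filter.Eventually.of_forall hintegrand)]
  rw [andreief μ f g (fun i j => entry_integrable θ a hθ ha i j)]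
  have hdet : (Matrix.of fun i j : Fin N => ∫ x, f i x * g j x ∂μ)
      = Matrix.of fun i j : Fin N => Real.Gamma ((i:ℝ) + (θ * (j:ℝ) + a + 1)) := by
    ext i j
    exact entry_val θ a hθ ha i j
  rw [hdet, det_gamma N θ a hθ ha]
  have hpair : (∏ i : Fin N, ∏ j ∈ Finset.Ioi i,
        ((θ * (j:ℝ) + a + 1) - (θ * (i:ℝ) + a + 1)))
      = θ ^ (N * (N-1)/2) * ∏ l ∈ Finset.range N, (l.factorial : ℝ) := by
    have h1 : ∀ i : Fin N, ∀ j ∈ Finset.Ioi i,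
        ((θ * (j:ℝ) + a + 1) - (θ * (i:ℝ) + a + 1))
          = θ * ((((j:ℕ) - (i:ℕ) : ℕ)) : ℝ) := by
      intro i j hj
      rw [Finset.mem_Ioi] at hj
      rw [Nat.cast_sub (le_of_lt hj)]
      ring
    rw [Finset.prod_congr rfl (fun i _ => Finset.prod_congr rfl (h1 i))]
    simp_rw [Finset.prod_mul_distrib, Finset.prod_const]
    rw [Finset.prod_pow_eq_pow_sum, sum_card_Ioi]
    congr 1
    have hc : (∏ i : Fin N, ∏ j ∈ Finset.Ioi i, ((((j:ℕ) - (i:ℕ) : ℕ)) : ℝ))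
        = (((∏ i : Fin N, ∏ j ∈ Finset.Ioi i, ((j:ℕ) - (i:ℕ))) : ℕ) : ℝ) := by
      push_cast
      rfl
    rw [hc, prod_prod_sub, Nat.cast_prod]
  have hGam : (∏ j : Fin N, Real.Gamma (θ * (j:ℝ) + a + 1))
      = ∏ l ∈ Finset.range N, Real.Gamma (θ * (l:ℝ) + a + 1) :=
    Fin.prod_univ_eq_prod_range (fun l => Real.Gamma (θ * (l:ℝ) + a + 1)) N
  have hRHS : (∏ l ∈ Finset.range N, Real.Gamma (θ * l + a + 1) * Real.Gamma ((l:ℝ) + 2))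
      = (∏ l ∈ Finset.range N, Real.Gamma (θ * l + a + 1)) *
          ∏ l ∈ Finset.range N, (((l+1).factorial : ℕ) : ℝ) := by
    rw [Finset.prod_mul_distrib]
    congr 1
    refine Finset.prod_congr rfl fun l _ => ?_
    have h2 : ((l:ℝ) + 2) = (((l+1 : ℕ)) : ℝ) + 1 := by push_cast; ring
    rw [h2, Real.Gamma_nat_eq_factorial]
  have hfactN : (N.factorial : ℝ) * ∏ l ∈ Finset.range N, (l.factorial : ℝ)
      = ∏ l ∈ Finset.range N, (((l+1).factorial : ℕ) : ℝ) := by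
    have h3 : N.factorial * ∏ l ∈ Finset.range N, l.factorial
        = ∏ l ∈ Finset.range N, (l+1).factorial := by
      simp_rw [Nat.factorial_succ]
      rw [Finset.prod_mul_distrib, Finset.prod_range_add_one_eq_factorial]
    exact_mod_cast congrArg (fun m : ℕ => (m : ℝ)) h3
  rw [hGam, hpair, hRHS, ← hfactN]
  ring
end

section
/- Let w: ℝ → ℝ≥0 be a measurable weight with finite moments, and θ > 0. Then ∫_{ℝ^N} ∏_{1≤i<j≤N}(x_j - x_i)(sgn(x_j)|x_j|^θ - sgn(x_i)|x_i|^θ) ∏_{k=1}^N w(x_k) dx = N! · det[ ∫_ℝ w(x) |x|^{j-1+θ(k-1)} (sgn x)^{j+k} dx ]_{j,k=1}^N. -/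
open MeasureTheory Finset

private lemma real_sign_measurable : Measurable Real.sign := by
  have h : Real.sign = fun r : ℝ => if r < 0 then (-1 : ℝ) else if 0 < r then 1 else 0 :=
    funext fun r => rfl
  rw [h]
  exact Measurable.ite (measurableSet_lt measurable_id measurable_const)
    measurable_const
    (Measurable.ite (measurableSet_lt measurable_const measurable_id)
      measurable_const measurable_const)

private lemma real_sign_mul_abs (x : ℝ) : Real.sign x * |x| = x := by
  rcases lt_trichotomy x 0 with h | rfl | h
  · rw [Real.sign_of_neg h, abs_of_neg h]; ring
  · simp
  · rw [Real.sign_of_pos h, abs_of_pos h]; ring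

private lemma real_sign_sq {x : ℝ} (hx : x ≠ 0) : Real.sign x ^ 2 = 1 := by
  rcases Real.sign_apply_eq_of_ne_zero x hx with h | h <;> rw [h] <;> norm_num

private lemma abs_sign_rpow {θ : ℝ} (hθ : 0 < θ) (x : ℝ) :
    |Real.sign x * |x| ^ θ| = |x| ^ θ := by
  rcases eq_or_ne x 0 with rfl | hx
  · simp [Real.zero_rpow hθ.ne']
  · rw [abs_mul, abs_of_nonneg (Real.rpow_nonneg (abs_nonneg x) θ)]
    rcases Real.sign_apply_eq_of_ne_zero x hx with h | h <;> rw [h] <;> norm_num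

private lemma exp_combine {θ : ℝ} (hθ : 0 < θ) (a b : ℕ) (x : ℝ) :
    |x| ^ a * (|x| ^ θ) ^ b = |x| ^ ((a : ℝ) + θ * b) := by
  rw [← Real.rpow_natCast |x| a, ← Real.rpow_natCast (|x| ^ θ) b,
    ← Real.rpow_mul (abs_nonneg x)]
  exact (Real.rpow_add_of_nonneg (abs_nonneg x) (by positivity) (by positivity)).symm

set_option maxHeartbeats 1000000 in
/-- Andréief/Heine-type identity for the generalised two-product ensemble on ℝ. -/
theorem andreief_identity (N : ℕ) (θ : ℝ) (hθ : 0 < θ)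
    (w : ℝ → ℝ) (hw : ∀ x, 0 ≤ w x) (hmeas : Measurable w)
    (hmom : ∀ j k : ℕ, j < N → k < N →
      Integrable (fun x : ℝ => w x * |x| ^ ((j : ℝ) + θ * k))) :
    (∫ x : Fin N → ℝ,
        (∏ i : Fin N, ∏ j ∈ Finset.Ioi i,
            (x j - x i) * (Real.sign (x j) * |x j| ^ θ - Real.sign (x i) * |x i| ^ θ)) *
          ∏ k : Fin N, w (x k)) =
      (Nat.factorial N : ℝ) *
        Matrix.det (Matrix.of fun j k : Fin N =>
          ∫ x : ℝ, w x * |x| ^ ((j : ℝ) + θ * (k : ℕ)) * (Real.sign x) ^ ((j : ℕ) + (k : ℕ) + 2)) := by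
  classical
  -- the two one-variable function families
  set f : ℝ → ℝ := fun x => Real.sign x * |x| ^ θ with hf
  set g : Fin N → Fin N → ℝ → ℝ := fun j k x => x ^ (j : ℕ) * f x ^ (k : ℕ) * w x with hg
  have hfm : Measurable f :=
    real_sign_measurable.mul ((Real.continuous_rpow_const hθ.le).comp continuous_abs).measurable
  -- absolute value of g
  have habsg : ∀ (a b : Fin N) (x : ℝ), |g a b x| = w x * |x| ^ ((a : ℝ) + θ * b) := by
    intro a b x
    rw [hg]
    simp only []
    rw [abs_mul, abs_mul, abs_pow, abs_pow, abs_of_nonneg (hw x)]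
    have hfx : |f x| = |x| ^ θ := abs_sign_rpow hθ x
    rw [hfx, exp_combine hθ]
    ring
  -- integrability of g
  have hgm : ∀ a b : Fin N, Measurable (g a b) := by
    intro a b
    exact ((measurable_id.pow_const _).mul (hfm.pow_const _)).mul hmeas
  have hgi : ∀ a b : Fin N, Integrable (g a b) := by
    intro a b
    refine (hmom a b a.isLt b.isLt).mono' (hgm a b).aestronglyMeasurable ?_
    filter_upwards with x
    rw [Real.norm_eq_abs, habsg]
  -- the entry-wise moment matrix
  set M : Matrix (Fin N) (Fin N) ℝ := Matrix.of (fun j k => ∫ x : ℝ, g j k x) with hM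
  -- the matrix in the statement equals M
  have hMeq : (Matrix.of fun j k : Fin N =>
      ∫ x : ℝ, w x * |x| ^ ((j : ℝ) + θ * (k : ℕ)) * (Real.sign x) ^ ((j : ℕ) + (k : ℕ) + 2)) = M := by
    ext j k
    rw [hM, Matrix.of_apply, Matrix.of_apply]
    refine integral_congr_ae ?_
    have h0 : ∀ᵐ x : ℝ, x ≠ 0 := by
      rw [ae_iff]
      simp [Set.setOf_eq_eq_singleton'] -- was simpa
      -- fall back measure_singleton (0 : ℝ)
    filter_upwards [h0] with x hx
    rw [hg]
    simp only []
    rw [hf]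
    simp only []
    have hxpow : x ^ (j : ℕ) = Real.sign x ^ (j : ℕ) * |x| ^ (j : ℕ) := by
      conv_lhs => rw [← real_sign_mul_abs x]
      rw [mul_pow]
    rw [hxpow, mul_pow, pow_add, pow_add, real_sign_sq hx]
    rw [← exp_combine hθ (j : ℕ) (k : ℕ) x]
    ring
  rw [hMeq]
  -- expand the integrand as a double sum over permutations
  have hint : ∀ x : Fin N → ℝ,
      (∏ i : Fin N, ∏ j ∈ Finset.Ioi i, (x j - x i) * (f (x j) - f (x i))) *
          ∏ k : Fin N, w (x k) =
        ∑ σ : Equiv.Perm (Fin N), ∑ τ : Equiv.Perm (Fin N),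
          ((Equiv.Perm.sign σ : ℤ) : ℝ) * ((Equiv.Perm.sign τ : ℤ) : ℝ) *
            ∏ k : Fin N, g (σ⁻¹ k) (τ⁻¹ k) (x k) := by
    intro x
    have h1 : (∏ i : Fin N, ∏ j ∈ Finset.Ioi i, (x j - x i) * (f (x j) - f (x i))) =
        (Matrix.vandermonde x).det * (Matrix.vandermonde fun i => f (x i)).det := by
      rw [Matrix.det_vandermonde, Matrix.det_vandermonde, ← Finset.prod_mul_distrib]
      exact Finset.prod_congr rfl fun i _ => Finset.prod_mul_distrib
    rw [h1, Matrix.det_apply', Matrix.det_apply', Finset.sum_mul_sum, Finset.sum_mul]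
    refine Finset.sum_congr rfl fun σ _ => ?_
    rw [Finset.sum_mul]
    refine Finset.sum_congr rfl fun τ _ => ?_
    have h2 : ∀ (v : Fin N → ℝ) (π : Equiv.Perm (Fin N)),
        (∏ i : Fin N, Matrix.vandermonde v (π i) i) = ∏ k : Fin N, v k ^ ((π⁻¹ k : Fin N) : ℕ) := by
      intro v π
      rw [← Equiv.prod_comp π (fun k => v k ^ ((π⁻¹ k : Fin N) : ℕ))]
      exact Finset.prod_congr rfl fun i _ => by rw [Matrix.vandermonde_apply, Equiv.Perm.inv_def, Equiv.symm_apply_apply]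
    rw [h2 x σ, h2 (fun i => f (x i)) τ]
    rw [hg]
    simp only []
    rw [Finset.prod_mul_distrib, Finset.prod_mul_distrib]
    ring
  -- rewrite the integral
  have hlhs : (∫ x : Fin N → ℝ,
      (∏ i : Fin N, ∏ j ∈ Finset.Ioi i,
          (x j - x i) * (Real.sign (x j) * |x j| ^ θ - Real.sign (x i) * |x i| ^ θ)) *
        ∏ k : Fin N, w (x k)) =
      ∑ σ : Equiv.Perm (Fin N), ∑ τ : Equiv.Perm (Fin N),
        ((Equiv.Perm.sign σ : ℤ) : ℝ) * ((Equiv.Perm.sign τ : ℤ) : ℝ) *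
          ∏ k : Fin N, M (σ⁻¹ k) (τ⁻¹ k) := by
    have : (∫ x : Fin N → ℝ,
        (∏ i : Fin N, ∏ j ∈ Finset.Ioi i,
            (x j - x i) * (Real.sign (x j) * |x j| ^ θ - Real.sign (x i) * |x i| ^ θ)) *
          ∏ k : Fin N, w (x k)) =
        ∫ x : Fin N → ℝ, ∑ σ : Equiv.Perm (Fin N), ∑ τ : Equiv.Perm (Fin N),
          ((Equiv.Perm.sign σ : ℤ) : ℝ) * ((Equiv.Perm.sign τ : ℤ) : ℝ) *
            ∏ k : Fin N, g (σ⁻¹ k) (τ⁻¹ k) (x k) := by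
      congr 1
      funext x
      exact hint x
    rw [this]
    rw [integral_finset_sum _ (fun σ _ => integrable_finset_sum _ (fun τ _ =>
      ((Integrable.fintype_prod (fun k => hgi (σ⁻¹ k) (τ⁻¹ k))).const_mul _)))]
    refine Finset.sum_congr rfl fun σ _ => ?_
    rw [integral_finset_sum _ (fun τ _ =>
      ((Integrable.fintype_prod (fun k => hgi (σ⁻¹ k) (τ⁻¹ k))).const_mul _))]
    refine Finset.sum_congr rfl fun τ _ => ?_
    rw [integral_const_mul]
    congr 1
    exact integral_fintype_prod_eq_prod (ι := Fin N) (fun k => g (σ⁻¹ k) (τ⁻¹ k))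
  rw [hlhs]
  -- the permutation-sum identity
  have hswap : ∀ (F : Equiv.Perm (Fin N) → ℝ), (∑ σ : Equiv.Perm (Fin N), F σ⁻¹) = ∑ σ, F σ :=
    fun F => Equiv.sum_comp (Equiv.inv (Equiv.Perm (Fin N))) F
  have step1 : (∑ σ : Equiv.Perm (Fin N), ∑ τ : Equiv.Perm (Fin N),
      ((Equiv.Perm.sign σ : ℤ) : ℝ) * ((Equiv.Perm.sign τ : ℤ) : ℝ) *
        ∏ k : Fin N, M (σ⁻¹ k) (τ⁻¹ k)) =
      ∑ σ : Equiv.Perm (Fin N), ∑ τ : Equiv.Perm (Fin N),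
      ((Equiv.Perm.sign σ : ℤ) : ℝ) * ((Equiv.Perm.sign τ : ℤ) : ℝ) *
        ∏ k : Fin N, M (σ k) (τ k) := by
    rw [← hswap (fun σ => ∑ τ : Equiv.Perm (Fin N),
      ((Equiv.Perm.sign σ : ℤ) : ℝ) * ((Equiv.Perm.sign τ : ℤ) : ℝ) * ∏ k : Fin N, M (σ k) (τ k))]
    refine Finset.sum_congr rfl fun σ _ => ?_
    rw [← hswap (fun τ => ((Equiv.Perm.sign σ⁻¹ : ℤ) : ℝ) * ((Equiv.Perm.sign τ : ℤ) : ℝ) *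
      ∏ k : Fin N, M (σ⁻¹ k) (τ k))]
    simp only [Equiv.Perm.sign_inv]
  rw [step1]
  have step2 : ∀ τ : Equiv.Perm (Fin N),
      (∑ σ : Equiv.Perm (Fin N),
        ((Equiv.Perm.sign σ : ℤ) : ℝ) * ((Equiv.Perm.sign τ : ℤ) : ℝ) *
          ∏ k : Fin N, M (σ k) (τ k)) = M.det := by
    intro τ
    rw [← Equiv.sum_comp (Equiv.mulRight τ) (fun σ =>
      ((Equiv.Perm.sign σ : ℤ) : ℝ) * ((Equiv.Perm.sign τ : ℤ) : ℝ) * ∏ k : Fin N, M (σ k) (τ k))]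
    rw [Matrix.det_apply']
    refine Finset.sum_congr rfl fun π _ => ?_
    have hprod : (∏ k : Fin N, M ((Equiv.mulRight τ π) k) (τ k)) = ∏ k : Fin N, M (π k) k := by
      rw [← Equiv.prod_comp τ (fun k => M (π k) k)]
      exact Finset.prod_congr rfl fun k _ => by simp [Equiv.Perm.mul_apply]
    rw [hprod]
    have hsign : ((Equiv.Perm.sign (Equiv.mulRight τ π) : ℤ) : ℝ) *
        ((Equiv.Perm.sign τ : ℤ) : ℝ) = ((Equiv.Perm.sign π : ℤ) : ℝ) := by
      have : Equiv.mulRight τ π = π * τ := rfl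
      rw [this, map_mul]
      push_cast
      rcases Int.units_eq_one_or (Equiv.Perm.sign τ) with h | h <;> rw [h] <;> norm_num
    rw [hsign]
  rw [Finset.sum_comm]
  calc (∑ τ : Equiv.Perm (Fin N), ∑ σ : Equiv.Perm (Fin N),
        ((Equiv.Perm.sign σ : ℤ) : ℝ) * ((Equiv.Perm.sign τ : ℤ) : ℝ) *
          ∏ k : Fin N, M (σ k) (τ k))
      = ∑ τ : Equiv.Perm (Fin N), M.det := by
        exact Finset.sum_congr rfl fun τ _ => step2 τ
    _ = (Nat.factorial N : ℝ) * M.det := by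
        rw [Finset.sum_const, Finset.card_univ, Fintype.card_perm, Fintype.card_fin, nsmul_eq_mul]
end

section
/- The e_N-recurrence coefficients: the unique coefficients c_s^{(ν)} such that F_ν(γ_1,...,γ_N) := Σ_{1≤l_1<...<l_{N-ν}≤N} ∏_{l∉{l_1,...,l_{N-ν}}} ∏_{m∈{l_1,...,l_{N-ν}}} [(γ_m+1-γ_l)/(γ_m-γ_l)] · ∏_{m∈{l_1,...,l_{N-ν}}}(γ_m+1) equals Σ_{s=0}^{ν} c_s^{(ν)} ∏_{l=1}^N (γ_l + s + 1) are c_s^{(ν)} = (-1)^{ν-s}/((ν-s)! s!). -/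
open Finset Polynomial

section Aux
variable {ι : Type*} [DecidableEq ι]

lemma key_interp (s : Finset ι) (v : ι → ℝ) (hv : Set.InjOn v s) (f : ℝ[X])
    (hf : f.degree < s.card) :
    ∑ i ∈ s, f.eval (v i) * ∏ j ∈ s.erase i, (v i - v j)⁻¹ = f.coeff (s.card - 1) := by
  have h := Lagrange.eq_interpolate hv hf
  have hc := congrArg (fun p => Polynomial.coeff p (s.card - 1)) h
  simp only [Lagrange.interpolate_apply, Polynomial.finset_sum_coeff] at hc
  rw [hc]
  refine Finset.sum_congr rfl fun i hi => ?_
  rw [Polynomial.coeff_C_mul]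
  congr 1
  -- basis coeff
  have hb : Lagrange.basis s v i =
      C (∏ j ∈ s.erase i, (v i - v j)⁻¹) * ∏ j ∈ s.erase i, (X - C (v j)) := by
    rw [Lagrange.basis, map_prod, ← Finset.prod_mul_distrib]
    exact Finset.prod_congr rfl fun j _ => rfl
  rw [hb, Polynomial.coeff_C_mul]
  have hm : (∏ j ∈ s.erase i, (X - C (v j))).Monic :=
    monic_prod_of_monic _ _ fun j _ => monic_X_sub_C _
  have hd : (∏ j ∈ s.erase i, (X - C (v j))).natDegree = s.card - 1 := by
    rw [natDegree_prod_of_monic _ _ fun j _ => monic_X_sub_C _]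
    simp [Finset.card_erase_of_mem hi]
  rw [← hd, hm.coeff_natDegree, mul_one]

lemma key_pow (s : Finset ι) (v : ι → ℝ) (hv : Set.InjOn v s) {k : ℕ} (hk : k < s.card) :
    ∑ i ∈ s, (v i + 1) ^ k * ∏ j ∈ s.erase i, (v i - v j)⁻¹ =
      if k = s.card - 1 then 1 else 0 := by
  have hdeg : ((X + 1 : ℝ[X]) ^ k).degree < s.card := by
    have hm : ((X + 1 : ℝ[X]) ^ k).Monic := by
      simpa using ((monic_X_add_C (1:ℝ)).pow k)
    have : ((X + 1 : ℝ[X]) ^ k).degree = k := by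
      rw [Polynomial.degree_eq_natDegree hm.ne_zero]
      norm_cast
      have : (X + 1 : ℝ[X]) = X + C 1 := by norm_num
      rw [this, Polynomial.natDegree_pow, Polynomial.natDegree_X_add_C, mul_one]
    rw [this]
    exact_mod_cast hk
  have h := key_interp s v hv ((X + 1) ^ k) hdeg
  have he : ∀ i, ((X + 1 : ℝ[X]) ^ k).eval (v i) = (v i + 1) ^ k := by
    intro i; simp
  simp only [he] at h
  rw [h]
  have := Polynomial.coeff_X_add_one_pow ℝ k (s.card - 1)
  rw [this]
  rcases eq_or_ne k (s.card - 1) with h1 | h1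
  · simp [h1]
  · have : k < s.card - 1 := by omega
    simp [h1, Nat.choose_eq_zero_of_lt this]

lemma pair_sum (s : Finset ι) (F : ι → Finset ι → ℝ) :
    ∑ a ∈ s, ∑ S ∈ (s.erase a).powerset, F a S
      = ∑ T ∈ s.powerset, ∑ a ∈ T, F a (T.erase a) := by
  rw [Finset.sum_sigma', Finset.sum_sigma']
  refine Finset.sum_bij' (fun p _ => ⟨insert p.1 p.2, p.1⟩)
    (fun p _ => ⟨p.2, p.1.erase p.2⟩) ?_ ?_ ?_ ?_ ?_
  · rintro ⟨a, S⟩ h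
    simp only [Finset.mem_sigma, Finset.mem_powerset] at h ⊢
    obtain ⟨ha, hS⟩ := h
    constructor
    · exact Finset.insert_subset ha (hS.trans (Finset.erase_subset _ _))
    · exact Finset.mem_insert_self _ _
  · rintro ⟨T, a⟩ h
    simp only [Finset.mem_sigma, Finset.mem_powerset] at h ⊢
    obtain ⟨hT, ha⟩ := h
    refine ⟨hT ha, ?_⟩
    intro x hx
    simp only [Finset.mem_erase] at hx ⊢
    exact ⟨hx.1, hT hx.2⟩
  · rintro ⟨a, S⟩ h
    simp only [Finset.mem_sigma, Finset.mem_powerset] at h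
    have : a ∉ S := fun hc => (Finset.mem_erase.mp (h.2 hc)).1 rfl
    simp [Finset.erase_insert this]
  · rintro ⟨T, a⟩ h
    simp only [Finset.mem_sigma, Finset.mem_powerset] at h
    simp [Finset.insert_erase h.2]
  · rintro ⟨a, S⟩ h
    simp only [Finset.mem_sigma, Finset.mem_powerset] at h
    have : a ∉ S := fun hc => (Finset.mem_erase.mp (h.2 hc)).1 rfl
    simp [Finset.erase_insert this]

lemma e0 (s : Finset ι) (v : ι → ℝ) (hv : Set.InjOn v s) :
    ∑ a ∈ s, ∏ b ∈ s.erase a, ((v a + 1 - v b) / (v a - v b)) = s.card := by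
  have step1 : ∀ a ∈ s, ∏ b ∈ s.erase a, ((v a + 1 - v b) / (v a - v b))
      = ∑ S ∈ (s.erase a).powerset, ∏ b ∈ S, (v a - v b)⁻¹ := by
    intro a ha
    have : ∀ b ∈ s.erase a, (v a + 1 - v b) / (v a - v b) = (v a - v b)⁻¹ + 1 := by
      intro b hb
      have hne : v a - v b ≠ 0 := by
        have := hv.ne ha (Finset.mem_of_mem_erase hb)
          (fun h => (Finset.mem_erase.mp hb).1 (h ▸ rfl))
        exact sub_ne_zero_of_ne this
      field_simp
      ring
    rw [Finset.prod_congr rfl this, Finset.prod_add]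
    exact Finset.sum_congr rfl fun S _ => by simp
  rw [Finset.sum_congr rfl step1, pair_sum]
  have step2 : ∀ T ∈ s.powerset, ∑ a ∈ T, ∏ b ∈ T.erase a, (v a - v b)⁻¹
      = if T.card = 1 then (1:ℝ) else 0 := by
    intro T hT
    rcases T.eq_empty_or_nonempty with rfl | hne
    · simp
    · have hsub := Finset.mem_powerset.mp hT
      have hvT : Set.InjOn v T := hv.mono (by exact_mod_cast hsub)
      have hcard : 0 < T.card := Finset.card_pos.mpr hne
      have := key_pow T v hvT (k := 0) hcard
      simp only [pow_zero, one_mul] at this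
      rw [this]
      congr 1
      simp only [eq_iff_iff]
      omega
  rw [Finset.sum_congr rfl step2, Finset.sum_boole]
  rw [← Finset.powersetCard_eq_filter, Finset.card_powersetCard, Nat.choose_one_right]

lemma diff_erase_erase {s T : Finset ι} {a : ι} (ha : a ∈ T) (hT : T ⊆ s) :
    (s.erase a) \ (T.erase a) = s \ T := by
  ext x
  simp only [Finset.mem_sdiff, Finset.mem_erase]
  constructor
  · rintro ⟨⟨hxa, hxs⟩, hx⟩
    exact ⟨hxs, fun hxT => hx ⟨hxa, hxT⟩⟩
  · rintro ⟨hxs, hxT⟩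
    exact ⟨⟨fun h => hxT (h ▸ ha), hxs⟩, fun h => hxT h.2⟩

lemma e1 (s : Finset ι) (v : ι → ℝ) (hv : Set.InjOn v s) :
    ∑ a ∈ s, (∏ b ∈ s.erase a, (v b + 1)) * ∏ b ∈ s.erase a, ((v b + 1 - v a) / (v b - v a))
      = ∏ b ∈ s, (v b + 2) - ∏ b ∈ s, (v b + 1) := by
  have step1 : ∀ a ∈ s,
      (∏ b ∈ s.erase a, (v b + 1)) * ∏ b ∈ s.erase a, ((v b + 1 - v a) / (v b - v a))
      = ∑ S ∈ (s.erase a).powerset,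
          (∏ b ∈ S, ((v a + 1) * (v b - v a)⁻¹)) * ∏ b ∈ (s.erase a) \ S, (v b + 2) := by
    intro a ha
    rw [← Finset.prod_mul_distrib, ← Finset.prod_add]
    refine Finset.prod_congr rfl fun b hb => ?_
    have hne : v b - v a ≠ 0 := by
      have := hv.ne (Finset.mem_of_mem_erase hb) ha (Finset.mem_erase.mp hb).1
      exact sub_ne_zero_of_ne this
    field_simp
    ring
  rw [Finset.sum_congr rfl step1, pair_sum]
  have step2 : ∀ T ∈ s.powerset,
      ∑ a ∈ T, (∏ b ∈ T.erase a, ((v a + 1) * (v b - v a)⁻¹)) * ∏ b ∈ (s.erase a) \ (T.erase a), (v b + 2)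
      = (-(-1:ℝ)^(T.card) + (if T = ∅ then 1 else 0)) * ∏ b ∈ s \ T, (v b + 2) := by
    intro T hT
    have hsub := Finset.mem_powerset.mp hT
    rcases T.eq_empty_or_nonempty with rfl | hne
    · simp
    · have h1 : ∀ a ∈ T, (s.erase a) \ (T.erase a) = s \ T :=
        fun a ha => diff_erase_erase ha hsub
      have h2 : ∑ a ∈ T, (∏ b ∈ T.erase a, ((v a + 1) * (v b - v a)⁻¹))
            * ∏ b ∈ (s.erase a) \ (T.erase a), (v b + 2)
          = (∑ a ∈ T, ∏ b ∈ T.erase a, ((v a + 1) * (v b - v a)⁻¹)) * ∏ b ∈ s \ T, (v b + 2) := by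
        rw [Finset.sum_mul]
        exact Finset.sum_congr rfl fun a ha => by rw [h1 a ha]
      rw [h2]
      congr 1
      -- inner sum = (-1)^(card-1)
      have h3 : ∀ a ∈ T, ∏ b ∈ T.erase a, ((v a + 1) * (v b - v a)⁻¹)
          = (-1:ℝ)^(T.card - 1) * ((v a + 1)^(T.card - 1) * ∏ b ∈ T.erase a, (v a - v b)⁻¹) := by
        intro a ha
        rw [Finset.prod_mul_distrib, Finset.prod_const, Finset.card_erase_of_mem ha]
        have : ∀ b ∈ T.erase a, (v b - v a)⁻¹ = (-1) * (v a - v b)⁻¹ := by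
          intro b hb
          rw [show v b - v a = -(v a - v b) by ring, ← neg_inv]
          ring
        rw [Finset.prod_congr rfl this, Finset.prod_mul_distrib, Finset.prod_const,
          Finset.card_erase_of_mem ha]
        ring
      rw [Finset.sum_congr rfl h3, ← Finset.mul_sum]
      have hvT : Set.InjOn v T := hv.mono (by exact_mod_cast hsub)
      have hcard : T.card - 1 < T.card := by
        have := Finset.card_pos.mpr hne; omega
      rw [key_pow T v hvT hcard, if_pos rfl]
      have : T ≠ ∅ := hne.ne_empty
      simp only [this, if_false, mul_one, add_zero]
      have hc := Finset.card_pos.mpr hne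
      have hp : (-1:ℝ)^(T.card) = -(-1:ℝ)^(T.card - 1) := by
        conv_lhs => rw [show T.card = (T.card - 1) + 1 by omega]
        rw [pow_succ]
        ring
      rw [hp]
      ring
  rw [Finset.sum_congr rfl step2]
  have expand : ∑ T ∈ s.powerset, (-(-1:ℝ)^(T.card) + (if T = ∅ then 1 else 0)) * ∏ b ∈ s \ T, (v b + 2)
      = -(∑ T ∈ s.powerset, (-1:ℝ)^(T.card) * ∏ b ∈ s \ T, (v b + 2))
        + ∑ T ∈ s.powerset, (if T = ∅ then (1:ℝ) else 0) * ∏ b ∈ s \ T, (v b + 2) := by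
    rw [← Finset.sum_neg_distrib, ← Finset.sum_add_distrib]
    exact Finset.sum_congr rfl fun T _ => by ring
  rw [expand]
  have h4 : ∑ T ∈ s.powerset, (-1:ℝ)^(T.card) * ∏ b ∈ s \ T, (v b + 2)
      = ∏ b ∈ s, (v b + 1) := by
    have := Finset.prod_add (fun _ => (-1:ℝ)) (fun b => v b + 2) s
    simp only [Finset.prod_const] at this
    rw [← this]
    exact Finset.prod_congr rfl fun b _ => by ring
  have h5 : ∑ T ∈ s.powerset, (if T = ∅ then (1:ℝ) else 0) * ∏ b ∈ s \ T, (v b + 2)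
      = ∏ b ∈ s, (v b + 2) := by
    rw [Finset.sum_eq_single ∅]
    · simp
    · intro T _ hTne; simp [hTne]
    · intro h; exact absurd (Finset.empty_mem_powerset s) h
  rw [h4, h5]
  ring

lemma dc {N k : ℕ} (hk : 1 ≤ k) (F : Finset (Fin N) → Fin N → ℝ) :
    ∑ L ∈ Finset.univ.powersetCard k, ∑ j ∈ L, F L j
      = ∑ M ∈ Finset.univ.powersetCard (k-1), ∑ j ∈ Mᶜ, F (insert j M) j := by
  rw [Finset.sum_sigma', Finset.sum_sigma']
  refine Finset.sum_bij' (fun p _ => ⟨p.1.erase p.2, p.2⟩)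
    (fun p _ => ⟨insert p.2 p.1, p.2⟩) ?_ ?_ ?_ ?_ ?_
  · rintro ⟨L, j⟩ h
    simp only [Finset.mem_sigma, Finset.mem_powersetCard_univ, Finset.mem_compl] at h ⊢
    exact ⟨by rw [Finset.card_erase_of_mem h.2, h.1], Finset.notMem_erase _ _⟩
  · rintro ⟨M, j⟩ h
    simp only [Finset.mem_sigma, Finset.mem_powersetCard_univ, Finset.mem_compl] at h ⊢
    constructor
    · rw [Finset.card_insert_of_notMem h.2, h.1]; omega
    · exact Finset.mem_insert_self _ _
  · rintro ⟨L, j⟩ h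
    simp only [Finset.mem_sigma, Finset.mem_powersetCard_univ] at h
    simp [Finset.insert_erase h.2]
  · rintro ⟨M, j⟩ h
    simp only [Finset.mem_sigma, Finset.mem_powersetCard_univ, Finset.mem_compl] at h
    simp [Finset.erase_insert h.2]
  · rintro ⟨L, j⟩ h
    simp only [Finset.mem_sigma, Finset.mem_powersetCard_univ] at h
    simp [Finset.insert_erase h.2]

lemma W_insert {N : ℕ} (γ : Fin N → ℝ) {M : Finset (Fin N)} {j : Fin N} (hj : j ∉ M) :
    (∏ m ∈ M, ((γ m + 1 - γ j) / (γ m - γ j)))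
      * ∏ l ∈ (insert j M)ᶜ, ∏ m ∈ insert j M, ((γ m + 1 - γ l) / (γ m - γ l))
    = (∏ l ∈ Mᶜ, ∏ m ∈ M, ((γ m + 1 - γ l) / (γ m - γ l)))
      * ∏ l ∈ Mᶜ.erase j, ((γ j + 1 - γ l) / (γ j - γ l)) := by
  have hjc : j ∈ Mᶜ := Finset.mem_compl.mpr hj
  rw [Finset.compl_insert]
  have h1 : ∀ l ∈ Mᶜ.erase j, ∏ m ∈ insert j M, ((γ m + 1 - γ l) / (γ m - γ l))
      = ((γ j + 1 - γ l) / (γ j - γ l)) * ∏ m ∈ M, ((γ m + 1 - γ l) / (γ m - γ l)) :=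
    fun l _ => Finset.prod_insert hj
  rw [Finset.prod_congr rfl h1, Finset.prod_mul_distrib,
    ← Finset.mul_prod_erase _ _ hjc]
  ring

lemma claim_step {N ν : ℕ} (hν : ν + 1 ≤ N) (γ : Fin N → ℝ) (hγ : Function.Injective γ) :
    ((ν:ℝ) + 1) * ∑ L ∈ Finset.univ.powersetCard (N - (ν+1)),
        (∏ m ∈ L, (γ m + 1)) * ∏ l ∈ Lᶜ, ∏ m ∈ L, ((γ m + 1 - γ l) / (γ m - γ l))
    = (∑ L ∈ Finset.univ.powersetCard (N - ν),
        (∏ m ∈ L, (γ m + 2)) * ∏ l ∈ Lᶜ, ∏ m ∈ L, ((γ m + 1 - γ l) / (γ m - γ l)))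
      - ∑ L ∈ Finset.univ.powersetCard (N - ν),
        (∏ m ∈ L, (γ m + 1)) * ∏ l ∈ Lᶜ, ∏ m ∈ L, ((γ m + 1 - γ l) / (γ m - γ l)) := by
  have hk : 1 ≤ N - ν := by omega
  -- rewrite RHS via e1
  have step1 : ∀ L ∈ Finset.univ.powersetCard (N - ν),
      (∏ m ∈ L, (γ m + 2)) * (∏ l ∈ Lᶜ, ∏ m ∈ L, ((γ m + 1 - γ l) / (γ m - γ l)))
        - (∏ m ∈ L, (γ m + 1)) * (∏ l ∈ Lᶜ, ∏ m ∈ L, ((γ m + 1 - γ l) / (γ m - γ l)))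
      = ∑ j ∈ L, ((∏ m ∈ L.erase j, (γ m + 1)) * ∏ m ∈ L.erase j, ((γ m + 1 - γ j) / (γ m - γ j)))
          * ∏ l ∈ Lᶜ, ∏ m ∈ L, ((γ m + 1 - γ l) / (γ m - γ l)) := by
    intro L _
    rw [← Finset.sum_mul, e1 L γ (hγ.injOn)]
    ring
  rw [← Finset.sum_sub_distrib, Finset.sum_congr rfl step1, dc hk]
  have hkk : N - ν - 1 = N - (ν + 1) := by omega
  rw [hkk, Finset.mul_sum]
  refine Finset.sum_congr rfl fun M hM => ?_
  have hMcard : M.card = N - (ν+1) := (Finset.mem_powersetCard_univ.mp hM)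
  have inner : ∀ j ∈ Mᶜ,
      ((∏ m ∈ (insert j M).erase j, (γ m + 1)) * ∏ m ∈ (insert j M).erase j, ((γ m + 1 - γ j) / (γ m - γ j)))
        * ∏ l ∈ (insert j M)ᶜ, ∏ m ∈ insert j M, ((γ m + 1 - γ l) / (γ m - γ l))
      = (∏ m ∈ M, (γ m + 1)) * ((∏ l ∈ Mᶜ, ∏ m ∈ M, ((γ m + 1 - γ l) / (γ m - γ l)))
          * ∏ l ∈ Mᶜ.erase j, ((γ j + 1 - γ l) / (γ j - γ l))) := by
    intro j hj
    have hjM : j ∉ M := Finset.mem_compl.mp hj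
    rw [Finset.erase_insert hjM, mul_assoc, W_insert γ hjM]
  rw [Finset.sum_congr rfl inner, ← Finset.mul_sum, ← Finset.mul_sum, e0 Mᶜ γ (hγ.injOn)]
  have : (Mᶜ.card : ℝ) = (ν : ℝ) + 1 := by
    rw [Finset.card_compl, hMcard]
    have : Fintype.card (Fin N) - (N - (ν+1)) = ν + 1 := by
      simp only [Fintype.card_fin]; omega
    rw [this]; push_cast; ring
  rw [this]; ring

noncomputable def cc (ν s : ℕ) : ℝ :=
  (-1 : ℝ) ^ (ν - s) / ((Nat.factorial (ν - s)) * (Nat.factorial s))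

lemma coeff_rec {ν s : ℕ} (hs : s ≤ ν + 1) :
    ((ν:ℝ) + 1) * cc (ν+1) s
      = (if 1 ≤ s then cc ν (s-1) else 0) - (if s ≤ ν then cc ν s else 0) := by
  rcases Nat.eq_zero_or_pos s with rfl | hs1
  · rw [if_neg (by omega : ¬ (1:ℕ) ≤ 0), if_pos (Nat.zero_le ν)]
    unfold cc
    simp only [Nat.sub_zero, Nat.factorial_zero]
    have h1 : (-1:ℝ)^(ν+1) = -(-1:ℝ)^ν := by rw [pow_succ]; ring
    rw [h1, Nat.factorial_succ]
    have := (Nat.factorial_pos ν).ne'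
    push_cast
    field_simp
    ring
  · rcases Nat.lt_or_ge ν s with hcase | hcase
    · have hseq : s = ν + 1 := by omega
      subst hseq
      rw [if_pos (by omega : (1:ℕ) ≤ ν + 1), if_neg (by omega : ¬ ν + 1 ≤ ν)]
      unfold cc
      have h2 : ν + 1 - 1 = ν := by omega
      rw [h2]
      simp only [Nat.sub_self, Nat.factorial_zero, pow_zero]
      rw [Nat.factorial_succ]
      push_cast
      rw [sub_zero]
      field_simp
    · obtain ⟨t, rfl⟩ : ∃ t, s = t + 1 := ⟨s - 1, by omega⟩
      rw [if_pos (by omega : (1:ℕ) ≤ t + 1), if_pos hcase]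
      set a := ν - (t+1) with ha
      have h1 : ν + 1 - (t+1) = a + 1 := by omega
      have h2 : t + 1 - 1 = t := by omega
      have h3 : ν - t = a + 1 := by omega
      unfold cc
      rw [h1, h2, h3, ← ha]
      have hp : (-1:ℝ)^(a+1) = -(-1:ℝ)^a := by rw [pow_succ]; ring
      rw [hp, Nat.factorial_succ a, Nat.factorial_succ t]
      have hν : (ν:ℝ) + 1 = ((a:ℝ) + 1) + ((t:ℝ) + 1) := by
        have : ν = a + (t+1) := by omega
        rw [this]; push_cast; ring
      rw [hν]
      have hfa := (Nat.factorial_pos a).ne'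
      have hft := (Nat.factorial_pos t).ne'
      push_cast
      field_simp
      ring

lemma rhs_rec (N ν : ℕ) (γ : Fin N → ℝ) :
    ((ν:ℝ) + 1) * ∑ s ∈ Finset.range (ν+2), cc (ν+1) s * ∏ l : Fin N, (γ l + s + 1)
    = (∑ s ∈ Finset.range (ν+1), cc ν s * ∏ l : Fin N, ((γ l + 1) + s + 1))
      - ∑ s ∈ Finset.range (ν+1), cc ν s * ∏ l : Fin N, (γ l + s + 1) := by
  set f : ℕ → ℝ := fun s => ∏ l : Fin N, (γ l + s + 1) with hf
  have hshift : ∀ s : ℕ, (∏ l : Fin N, ((γ l + 1) + s + 1)) = f (s+1) := by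
    intro s
    rw [hf]
    refine Finset.prod_congr rfl fun l _ => ?_
    push_cast
    ring
  have e1 : ∑ s ∈ Finset.range (ν+1), cc ν s * ∏ l : Fin N, ((γ l + 1) + s + 1)
      = ∑ s ∈ Finset.range (ν+2), (if 1 ≤ s then cc ν (s-1) else 0) * f s := by
    rw [Finset.sum_range_succ' (fun s => (if 1 ≤ s then cc ν (s-1) else 0) * f s) (ν+1)]
    rw [if_neg (by omega : ¬ (1:ℕ) ≤ 0), zero_mul, add_zero]
    refine Finset.sum_congr rfl fun s _ => ?_
    rw [hshift s, if_pos (by omega : 1 ≤ s + 1), Nat.add_sub_cancel]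
  have e2 : ∑ s ∈ Finset.range (ν+1), cc ν s * ∏ l : Fin N, (γ l + s + 1)
      = ∑ s ∈ Finset.range (ν+2), (if s ≤ ν then cc ν s else 0) * f s := by
    rw [Finset.sum_range_succ (fun s => (if s ≤ ν then cc ν s else 0) * f s) (ν+1)]
    rw [if_neg (by omega : ¬ ν + 1 ≤ ν), zero_mul, add_zero]
    refine Finset.sum_congr rfl fun s hs => ?_
    rw [if_pos (by exact Nat.lt_succ_iff.mp (Finset.mem_range.mp hs))]
  rw [e1, e2, ← Finset.sum_sub_distrib, Finset.mul_sum]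
  refine Finset.sum_congr rfl fun s hs => ?_
  have hsle : s ≤ ν + 1 := by
    have := Finset.mem_range.mp hs; omega
  rw [← mul_assoc, coeff_rec hsle, sub_mul]

end Aux

/-- The e_ν-recurrence coefficients for the Laguerre-type polynomial ensemble:
F_ν(γ) = Σ_{s=0}^ν (-1)^{ν-s}/((ν-s)! s!) ∏_l (γ_l+s+1). -/
theorem laguerre_esymm_coefficients (N ν : ℕ) (hν : ν ≤ N)
    (γ : Fin N → ℝ) (hγ : Function.Injective γ) :
    (∑ L ∈ Finset.univ.powersetCard (N - ν),
        (∏ m ∈ L, (γ m + 1)) *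
          ∏ l ∈ Lᶜ, ∏ m ∈ L, ((γ m + 1 - γ l) / (γ m - γ l))) =
      ∑ s ∈ Finset.range (ν + 1),
        ((-1 : ℝ) ^ (ν - s) / ((Nat.factorial (ν - s)) * (Nat.factorial s))) *
          ∏ l : Fin N, (γ l + s + 1) := by
  have hcc : ∀ (μ s : ℕ), ((-1 : ℝ) ^ (μ - s) / ((Nat.factorial (μ - s)) * (Nat.factorial s)))
      = cc μ s := fun _ _ => rfl
  simp only [hcc]
  induction ν generalizing γ with
  | zero =>
    rw [Nat.sub_zero]
    have hps : (Finset.univ : Finset (Fin N)).powersetCard N = {Finset.univ} := by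
      have := Finset.powersetCard_self (Finset.univ : Finset (Fin N))
      simpa using this
    rw [hps, Finset.sum_singleton, Finset.compl_univ,
      Finset.prod_empty, mul_one, Finset.sum_range_one]
    have : cc 0 0 = 1 := by simp [cc]
    rw [this, one_mul]
    exact Finset.prod_congr rfl fun l _ => by norm_num
  | succ ν ih =>
    have hν' : ν ≤ N := by omega
    have hγ1 : Function.Injective (fun i => γ i + 1) := by
      intro a b h
      exact hγ (by simpa using h)
    have IH1 := ih hν' γ hγ
    have IH2 := ih hν' (fun i => γ i + 1) hγ1
    have hclaim := claim_step hν γ hγ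
    have hrec := rhs_rec N ν γ
    -- shifted LHS equals the (γ+2) sum
    have hsh : (∑ L ∈ Finset.univ.powersetCard (N - ν),
          (∏ m ∈ L, ((fun i => γ i + 1) m + 1)) *
            ∏ l ∈ Lᶜ, ∏ m ∈ L,
              (((fun i => γ i + 1) m + 1 - (fun i => γ i + 1) l) /
                ((fun i => γ i + 1) m - (fun i => γ i + 1) l)))
        = ∑ L ∈ Finset.univ.powersetCard (N - ν),
            (∏ m ∈ L, (γ m + 2)) *
              ∏ l ∈ Lᶜ, ∏ m ∈ L, ((γ m + 1 - γ l) / (γ m - γ l)) := by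
      refine Finset.sum_congr rfl fun L _ => ?_
      congr 1
      · exact Finset.prod_congr rfl fun m _ => by ring
      · exact Finset.prod_congr rfl fun l _ => Finset.prod_congr rfl fun m _ => by
          simp only []
          ring_nf
    -- shifted RHS equals the shifted-product sum in hrec
    have hsh2 : (∑ s ∈ Finset.range (ν + 1), cc ν s * ∏ l : Fin N, ((fun i => γ i + 1) l + s + 1))
        = ∑ s ∈ Finset.range (ν + 1), cc ν s * ∏ l : Fin N, ((γ l + 1) + s + 1) := by
      refine Finset.sum_congr rfl fun s _ => ?_
      simp only []
    have hmul : ((ν:ℝ) + 1) * (∑ L ∈ Finset.univ.powersetCard (N - (ν+1)),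
          (∏ m ∈ L, (γ m + 1)) * ∏ l ∈ Lᶜ, ∏ m ∈ L, ((γ m + 1 - γ l) / (γ m - γ l)))
        = ((ν:ℝ) + 1) * ∑ s ∈ Finset.range (ν + 2), cc (ν+1) s * ∏ l : Fin N, (γ l + s + 1) := by
      rw [hclaim, hrec, ← IH1, ← hsh2, ← IH2, ← hsh]
    have hne : ((ν:ℝ) + 1) ≠ 0 := by positivity
    have := mul_left_cancel₀ hne hmul
    exact this
end

section
/- Laguerre biorthogonal polynomials of q-type: the polynomial q_k(x) = Σ_{j=0}^k (-1)^{k-j} C(k,j) [Γ(1+a+θk)/Γ(1+a+θj)] x^j satisfies ∫_0^∞ x^a e^{-x} p(x) q_k(x^θ) dx = 0 for every polynomial p of degree less than k, where a > -1 and θ > 0. -/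
open MeasureTheory Polynomial

lemma alt_sum_choose_eval : ∀ (k : ℕ) (P : Polynomial ℝ), P.degree < k →
    ∑ j ∈ Finset.range (k + 1), (-1:ℝ) ^ j * (k.choose j) * P.eval (j:ℝ) = 0 := by
  intro k
  induction k with
  | zero =>
    intro P hP
    have hP0 : P = 0 := degree_eq_bot.mp (Nat.WithBot.lt_zero_iff.mp (by exact_mod_cast hP))
    simp [hP0]
  | succ k ih =>
    intro P hP
    by_cases hP0 : P = 0
    · simp [hP0]
    set Q : Polynomial ℝ := P.comp (X + C 1) - P with hQdef
    have hlc : (P.comp (X + C 1)).leadingCoeff = P.leadingCoeff := by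
      rw [leadingCoeff_comp (by rw [natDegree_X_add_C]; exact one_ne_zero)]
      rw [leadingCoeff_X_add_C, one_pow, mul_one]
    have hcomp0 : P.comp (X + C 1) ≠ 0 := by
      refine leadingCoeff_ne_zero.mp ?_
      rw [hlc]
      exact leadingCoeff_ne_zero.mpr hP0
    have hcompdeg : (P.comp (X + C 1)).degree = P.degree := by
      rw [degree_eq_natDegree hcomp0, degree_eq_natDegree hP0, natDegree_comp,
        natDegree_X_add_C, mul_one]
    have hdegQ : Q.degree < k := by
      have h1 : Q.degree < P.degree := by
        have := degree_sub_lt hcompdeg hcomp0 hlc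
        rwa [hcompdeg] at this
      have h2 : P.natDegree < k + 1 := (natDegree_lt_iff_degree_lt hP0).mpr hP
      have h3 : P.degree ≤ (k : WithBot ℕ) := by
        rw [degree_eq_natDegree hP0]
        exact_mod_cast Nat.lt_succ_iff.mp h2
      exact lt_of_lt_of_le h1 h3
    have hQval : ∀ j : ℕ, Q.eval (j:ℝ) = P.eval ((j:ℝ) + 1) - P.eval (j:ℝ) := by
      intro j; simp [hQdef, eval_comp]
    have key := ih Q hdegQ
    -- sum manipulation
    have e1 : ∑ j ∈ Finset.range (k + 2), (-1:ℝ) ^ j * ((k+1).choose j) * P.eval (j:ℝ)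
        = (∑ j ∈ Finset.range (k + 1), (-1:ℝ) ^ (j+1) * ((k+1).choose (j+1)) * P.eval ((j:ℝ)+1))
          + P.eval (0:ℝ) := by
      rw [Finset.sum_range_succ' (fun j => (-1:ℝ) ^ j * ((k+1).choose j) * P.eval (j:ℝ)) (k+1)]
      simp
    have e2 : ∀ j, ((k+1).choose (j+1) : ℝ) = (k.choose j : ℝ) + (k.choose (j+1) : ℝ) := by
      intro j; rw [Nat.choose_succ_succ]; push_cast; ring
    have e3 : ∑ j ∈ Finset.range (k + 1), (-1:ℝ) ^ (j+1) * ((k+1).choose (j+1)) * P.eval ((j:ℝ)+1)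
        = (∑ j ∈ Finset.range (k + 1), (-1:ℝ) ^ (j+1) * (k.choose j) * P.eval ((j:ℝ)+1))
          + ∑ j ∈ Finset.range (k + 1), (-1:ℝ) ^ (j+1) * (k.choose (j+1)) * P.eval ((j:ℝ)+1) := by
      rw [← Finset.sum_add_distrib]
      refine Finset.sum_congr rfl fun j _ => by rw [e2]; push_cast; ring
    have e4 : ∑ j ∈ Finset.range (k + 1), (-1:ℝ) ^ (j+1) * (k.choose (j+1)) * P.eval ((j:ℝ)+1)
        = (∑ j ∈ Finset.range (k + 1), (-1:ℝ) ^ j * (k.choose j) * P.eval (j:ℝ)) - P.eval (0:ℝ) := by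
      have h5 : ∑ j ∈ Finset.range (k + 2), (-1:ℝ) ^ j * (k.choose j) * P.eval (j:ℝ)
          = (∑ j ∈ Finset.range (k + 1), (-1:ℝ) ^ (j+1) * (k.choose (j+1)) * P.eval ((j:ℝ)+1))
            + P.eval (0:ℝ) := by
        rw [Finset.sum_range_succ' (fun j => (-1:ℝ) ^ j * (k.choose j) * P.eval (j:ℝ)) (k+1)]
        simp
      have h6 : ∑ j ∈ Finset.range (k + 2), (-1:ℝ) ^ j * (k.choose j) * P.eval (j:ℝ)
          = ∑ j ∈ Finset.range (k + 1), (-1:ℝ) ^ j * (k.choose j) * P.eval (j:ℝ) := by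
        rw [Finset.sum_range_succ]
        simp [Nat.choose_succ_self]
      rw [h6] at h5
      linarith
    have e5 : ∑ j ∈ Finset.range (k + 1), (-1:ℝ) ^ (j+1) * (k.choose j) * P.eval ((j:ℝ)+1)
        = -(∑ j ∈ Finset.range (k + 1), (-1:ℝ) ^ j * (k.choose j) * (Q.eval (j:ℝ) + P.eval (j:ℝ))) := by
      rw [← Finset.sum_neg_distrib]
      refine Finset.sum_congr rfl fun j _ => ?_
      rw [hQval j]
      ring
    have e6 : ∑ j ∈ Finset.range (k + 1), (-1:ℝ) ^ j * (k.choose j) * (Q.eval (j:ℝ) + P.eval (j:ℝ))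
        = (∑ j ∈ Finset.range (k + 1), (-1:ℝ) ^ j * (k.choose j) * Q.eval (j:ℝ))
          + ∑ j ∈ Finset.range (k + 1), (-1:ℝ) ^ j * (k.choose j) * P.eval (j:ℝ) := by
      rw [← Finset.sum_add_distrib]
      exact Finset.sum_congr rfl fun j _ => by ring
    rw [show k + 1 + 1 = k + 2 from rfl]
    rw [e1, e3, e4, e5, e6, key]
    ring

lemma Gamma_add_nat {s : ℝ} (hs : 0 < s) (m : ℕ) :
    Real.Gamma (s + m) = Real.Gamma s * ∏ i ∈ Finset.range m, (s + i) := by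
  induction m with
  | zero => simp
  | succ m ih =>
    have h : s + ((m+1 : ℕ) : ℝ) = (s + m) + 1 := by push_cast; ring
    rw [h, Real.Gamma_add_one (by positivity), ih, Finset.prod_range_succ]
    ring
/-- The Laguerre biorthogonal polynomial of q-type is orthogonal (against x^a e^{-x})
to all polynomials of degree less than k. -/
theorem laguerre_q_orthogonality (k : ℕ) (a θ : ℝ) (ha : -1 < a) (hθ : 0 < θ)
    (p : Polynomial ℝ) (hp : p.degree < k) :
    ∫ x in Set.Ioi (0:ℝ),
        x ^ a * Real.exp (-x) * p.eval x *
          ∑ j ∈ Finset.range (k + 1),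
            (-1 : ℝ) ^ (k - j) * (Nat.choose k j) *
              (Real.Gamma (1 + a + θ * k) / Real.Gamma (1 + a + θ * j)) * (x ^ θ) ^ j = 0 := by
  rcases Nat.eq_zero_or_pos k with hk0 | hk
  · subst hk0
    have hp0 : p = 0 := degree_eq_bot.mp (Nat.WithBot.lt_zero_iff.mp (by exact_mod_cast hp))
    simp [hp0]
  have hnd : p.natDegree < k := by
    rcases eq_or_ne p 0 with h | h
    · simpa [h] using hk
    · exact (natDegree_lt_iff_degree_lt h).mpr hp
  set c : ℕ → ℕ → ℝ := fun m j => p.coeff m *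
    ((-1:ℝ) ^ (k - j) * (k.choose j) *
      (Real.Gamma (1 + a + θ * k) / Real.Gamma (1 + a + θ * j))) with hc
  have hθj : ∀ j : ℕ, (0:ℝ) ≤ θ * j := fun j => by positivity
  have hspos : ∀ (m j : ℕ), 0 < 1 + a + (m:ℝ) + θ * j := by
    intro m j
    have h1 : (0:ℝ) ≤ (m:ℝ) := Nat.cast_nonneg m
    have h2 := hθj j
    linarith
  have heq : Set.EqOn
      (fun x : ℝ => x ^ a * Real.exp (-x) * p.eval x *
        ∑ j ∈ Finset.range (k + 1),
          (-1 : ℝ) ^ (k - j) * (Nat.choose k j) *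
            (Real.Gamma (1 + a + θ * k) / Real.Gamma (1 + a + θ * j)) * (x ^ θ) ^ j)
      (fun x : ℝ => ∑ m ∈ Finset.range k, ∑ j ∈ Finset.range (k + 1),
          c m j * (Real.exp (-x) * x ^ ((1 + a + (m:ℝ) + θ * j) - 1)))
      (Set.Ioi 0) := by
    intro x hx
    have hx0 : (0:ℝ) < x := hx
    simp only
    rw [eval_eq_sum_range' hnd x]
    simp only [Finset.mul_sum, Finset.sum_mul]
    rw [Finset.sum_comm]
    refine Finset.sum_congr rfl fun m _ => Finset.sum_congr rfl fun j _ => ?_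
    have key : x ^ ((1 + a + (m:ℝ) + θ*j) - 1) = x ^ a * x ^ m * (x^θ)^j := by
      rw [show (1 + a + (m:ℝ) + θ*j) - 1 = a + (m:ℝ) + θ*j by ring,
        Real.rpow_add hx0, Real.rpow_add hx0, Real.rpow_natCast,
        Real.rpow_mul hx0.le, Real.rpow_natCast]
    rw [hc, key]
    ring
  rw [setIntegral_congr_fun measurableSet_Ioi heq]
  have hint : ∀ m j : ℕ, IntegrableOn
      (fun x => c m j * (Real.exp (-x) * x ^ ((1 + a + (m:ℝ) + θ*j) - 1))) (Set.Ioi 0) :=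
    fun m j => (Real.GammaIntegral_convergent (hspos m j)).const_mul _
  rw [integral_finset_sum _ (fun m _ => integrable_finset_sum _ (fun j _ => hint m j))]
  have hval : ∀ m j : ℕ, (∫ x in Set.Ioi (0:ℝ),
      c m j * (Real.exp (-x) * x ^ ((1 + a + (m:ℝ) + θ*j) - 1)))
      = c m j * Real.Gamma (1 + a + m + θ*j) := by
    intro m j
    rw [MeasureTheory.integral_const_mul, ← Real.Gamma_eq_integral (hspos m j)]
  refine Finset.sum_eq_zero fun m hm => ?_
  rw [integral_finset_sum _ (fun j _ => hint m j)]
  have hm' : m < k := Finset.mem_range.mp hm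
  set Qp : Polynomial ℝ := ∏ i ∈ Finset.range m, (C θ * X + C (1 + a + (i:ℝ))) with hQp
  have hdegQ : Qp.degree < k := by
    have h1 : Qp.degree = (m : WithBot ℕ) := by
      rw [hQp, degree_prod, Finset.sum_congr rfl (fun i _ => degree_linear hθ.ne'),
        Finset.sum_const, Finset.card_range, nsmul_eq_mul, mul_one]
    rw [h1]
    exact_mod_cast hm'
  have hQeval : ∀ j : ℕ, Qp.eval (j:ℝ) = ∏ i ∈ Finset.range m, (1 + a + θ*j + i) := by
    intro j
    rw [hQp, eval_prod]
    exact Finset.prod_congr rfl fun i _ => by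
      simp only [eval_add, eval_mul, eval_C, eval_X]; ring
  have hGpos : ∀ j : ℕ, (0:ℝ) < 1 + a + θ * j := by
    intro j; have := hθj j; linarith
  have hGamma : ∀ j : ℕ, Real.Gamma (1 + a + (m:ℝ) + θ*j)
      = Real.Gamma (1 + a + θ*j) * Qp.eval (j:ℝ) := by
    intro j
    rw [hQeval j, show (1 + a + (m:ℝ) + θ*j) = (1 + a + θ*j) + m by ring,
      Gamma_add_nat (hGpos j) m]
  have hterm : ∀ j ∈ Finset.range (k+1),
      c m j * Real.Gamma (1 + a + (m:ℝ) + θ*j)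
      = (p.coeff m * Real.Gamma (1 + a + θ*k) * (-1:ℝ)^k) *
          ((-1:ℝ)^j * (k.choose j) * Qp.eval (j:ℝ)) := by
    intro j hj
    have hjk : j ≤ k := Nat.lt_succ_iff.mp (Finset.mem_range.mp hj)
    have h2 : ((-1:ℝ)^j) * ((-1:ℝ)^j) = 1 := by
      rw [← pow_add]; exact Even.neg_one_pow ⟨j, rfl⟩
    have e1 : (-1:ℝ)^(k-j) * (-1:ℝ)^j = (-1:ℝ)^k := by
      rw [← pow_add]; congr 1; omega
    have hsign : (-1:ℝ)^(k-j) = (-1:ℝ)^k * (-1:ℝ)^j := by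
      linear_combination ((-1:ℝ)^j) * e1 - ((-1:ℝ)^(k-j)) * h2
    have hGne : Real.Gamma (1 + a + θ*j) ≠ 0 := (Real.Gamma_pos_of_pos (hGpos j)).ne'
    rw [hGamma j]
    simp only [hc]
    rw [hsign]
    field_simp
  calc ∑ j ∈ Finset.range (k+1), ∫ x in Set.Ioi (0:ℝ),
        c m j * (Real.exp (-x) * x ^ ((1 + a + (m:ℝ) + θ*j) - 1))
      = ∑ j ∈ Finset.range (k+1), (p.coeff m * Real.Gamma (1 + a + θ*k) * (-1:ℝ)^k) *
          ((-1:ℝ)^j * (k.choose j) * Qp.eval (j:ℝ)) := by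
        refine Finset.sum_congr rfl fun j hj => ?_
        rw [hval m j, hterm j hj]
    _ = (p.coeff m * Real.Gamma (1 + a + θ*k) * (-1:ℝ)^k) *
          ∑ j ∈ Finset.range (k+1), (-1:ℝ)^j * (k.choose j) * Qp.eval (j:ℝ) := by
        rw [Finset.mul_sum]
    _ = 0 := by rw [alt_sum_choose_eval k Qp hdegQ, mul_zero]
end

section
/- Laguerre biorthogonal normalization: with p_k(x) = θ^k Σ_{ν=0}^k x^ν Σ_{s=0}^ν [(-1)^{k-s}/((ν-s)! s!)] Γ(k+(a+s+1)/θ)/Γ((a+s+1)/θ) and q_k(x) = Σ_{j=0}^k (-1)^{k-j} C(k,j) [Γ(1+a+θk)/Γ(1+a+θj)] x^j, one has ∫_0^∞ x^a e^{-x} p_k(x) q_k(x^θ) dx = θ^k Γ(θk+a+1) Γ(k+1), for a > -1, θ > 0. -/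
open MeasureTheory

open Polynomial Finset


lemma gamma_ascending (t : ℝ) (ht : 0 < t) (n : ℕ) :
    Real.Gamma (t + n) = Real.Gamma t * ∏ i ∈ Finset.range n, (t + i) := by
  induction n with
  | zero => simp
  | succ n ih =>
    have h : t + ((n:ℕ)+1 : ℕ) = (t + n) + 1 := by push_cast; ring
    rw [h, Real.Gamma_add_one (by positivity), ih, Finset.prod_range_succ]
    ring

lemma coeff_comp_X_add_one (P : ℝ[X]) (n : ℕ) :
    (P.comp (X + 1)).coeff n =
      ∑ m ∈ Finset.range (P.natDegree + 1), P.coeff m * (m.choose n : ℝ) := by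
  conv_lhs => rw [P.as_sum_range]
  rw [Polynomial.sum_comp, finset_sum_coeff]
  refine Finset.sum_congr rfl fun m _ => ?_
  rw [monomial_comp, coeff_C_mul, coeff_X_add_one_pow]

open fwdDiff in
lemma fwdDiff_poly_eval (P : ℝ[X]) :
    fwdDiff (1:ℝ) (fun x => P.eval x) = fun x => (P.comp (X + 1) - P).eval x := by
  funext x; simp [fwdDiff]

lemma coeff_comp_helper (P : ℝ[X]) (n : ℕ) (hn : P.natDegree ≤ n + 1) :
    (P.comp (X+1)).coeff n = P.coeff n + ((n:ℝ)+1) * P.coeff (n+1) := by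
  rw [coeff_comp_X_add_one]
  rw [Finset.sum_subset (Finset.range_subset_range.2 (by omega : P.natDegree + 1 ≤ n + 2))
    (fun m _ hm => by
      rw [Polynomial.coeff_eq_zero_of_natDegree_lt (by simp only [Finset.mem_range, not_lt] at hm; omega),
        zero_mul])]
  rw [Finset.sum_range_succ, Finset.sum_range_succ,
    Finset.sum_eq_zero (fun m hm => by
      rw [Nat.choose_eq_zero_of_lt (Finset.mem_range.1 hm), Nat.cast_zero, mul_zero]),
    Nat.choose_self, Nat.choose_succ_self_right]
  push_cast; ring

open fwdDiff in
lemma fd_poly : ∀ (k : ℕ) (P : ℝ[X]), P.natDegree ≤ k →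
    (fwdDiff (1:ℝ))^[k] (fun x => P.eval x) 0 = (k.factorial : ℝ) * P.coeff k := by
  intro k
  induction k with
  | zero =>
    intro P hP
    rw [Polynomial.eq_C_of_natDegree_le_zero hP]
    simp
  | succ k ih =>
    intro P hP
    rw [Function.iterate_succ_apply, fwdDiff_poly_eval]
    have hQdeg : (P.comp (X+1) - P).natDegree ≤ k := by
      rw [Polynomial.natDegree_le_iff_coeff_eq_zero]
      intro m hm
      have h1 : P.coeff (m+1) = 0 := Polynomial.coeff_eq_zero_of_natDegree_lt (by omega)
      rw [Polynomial.coeff_sub, coeff_comp_helper P m (by omega), h1]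
      ring
    rw [ih _ hQdeg, Polynomial.coeff_sub, coeff_comp_helper P k hP, Nat.factorial_succ]
    push_cast; ring

lemma fd_sum (k : ℕ) (P : ℝ[X]) (hP : P.natDegree ≤ k) :
    ∑ j ∈ Finset.range (k+1), (-1:ℝ)^(k-j) * (k.choose j : ℝ) * P.eval (j:ℝ)
      = (k.factorial : ℝ) * P.coeff k := by
  rw [← fd_poly k P hP, fwdDiff_iter_eq_sum_shift]
  refine Finset.sum_congr rfl fun j hj => ?_
  rw [zsmul_eq_mul]
  push_cast
  rw [zero_add, nsmul_eq_mul, mul_one]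

lemma laguerre_sum_identity (k : ℕ) (a θ : ℝ) (ha : -1 < a) (hθ : 0 < θ) :
    ∑ ν ∈ Finset.range (k + 1), ∑ j ∈ Finset.range (k + 1),
      (θ ^ k *
        (∑ s ∈ Finset.range (ν + 1),
          ((-1 : ℝ) ^ (k - s) / ((Nat.factorial (ν - s)) * (Nat.factorial s))) *
            (Real.Gamma (k + (a + s + 1) / θ) / Real.Gamma ((a + s + 1) / θ))) *
        ((-1 : ℝ) ^ (k - j) * (Nat.choose k j) *
          (Real.Gamma (1 + a + θ * k) / Real.Gamma (1 + a + θ * j)))) *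
        Real.Gamma (a + ν + θ * j + 1)
    = θ ^ k * Real.Gamma (θ * k + a + 1) * Real.Gamma (k + 1) := by
  have hθ0 : θ ≠ 0 := hθ.ne'
  have hpos : ∀ j : ℕ, (0:ℝ) < a + θ * j + 1 := by
    intro j
    have : (0:ℝ) ≤ θ * j := mul_nonneg hθ.le (Nat.cast_nonneg j)
    linarith
  -- inner j-sum
  have hj : ∀ ν, ν ≤ k →
      ∑ j ∈ Finset.range (k + 1),
        ((-1 : ℝ) ^ (k - j) * (Nat.choose k j) *
          (Real.Gamma (1 + a + θ * k) / Real.Gamma (1 + a + θ * j))) *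
          Real.Gamma (a + ν + θ * j + 1)
      = Real.Gamma (1 + a + θ * k) * (Nat.factorial k) *
          (if ν = k then θ ^ k else 0) := by
    intro ν hν
    set B : Polynomial ℝ := Polynomial.C (θ ^ ν) *
      ∏ i ∈ Finset.range ν, (X + Polynomial.C ((a + 1 + i) / θ)) with hB
    have hmonic : (∏ i ∈ Finset.range ν, (X + Polynomial.C ((a + 1 + i) / θ))).Monic :=
      monic_prod_of_monic _ _ fun i _ => monic_X_add_C _
    have hdeg : (∏ i ∈ Finset.range ν, (X + Polynomial.C ((a + 1 + i) / θ))).natDegree = ν := by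
      rw [Polynomial.natDegree_prod_of_monic _ _ fun i _ => monic_X_add_C _]
      simp only [Polynomial.natDegree_X_add_C, Finset.sum_const, Finset.card_range, smul_eq_mul,
        mul_one]
    have hBdeg : B.natDegree ≤ k := by
      refine le_trans (Polynomial.natDegree_C_mul_le _ _) (by rw [hdeg]; exact hν)
    have hBeval : ∀ j : ℕ, Real.Gamma (a + ν + θ * j + 1)
        = Real.Gamma (1 + a + θ * j) * B.eval (j : ℝ) := by
      intro j
      have h1 : a + (ν:ℝ) + θ * j + 1 = (a + θ * j + 1) + ν := by ring
      rw [h1, gamma_ascending _ (hpos j)]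
      have h2 : B.eval (j:ℝ) = ∏ i ∈ Finset.range ν, (a + θ * j + 1 + i) := by
        simp only [hB, Polynomial.eval_mul, Polynomial.eval_C, Polynomial.eval_prod,
          Polynomial.eval_add, Polynomial.eval_X]
        rw [show (θ:ℝ) ^ ν = ∏ _i ∈ Finset.range ν, θ by
          rw [Finset.prod_const, Finset.card_range], ← Finset.prod_mul_distrib]
        refine Finset.prod_congr rfl fun i _ => ?_
        field_simp
        ring
      rw [h2, show a + θ * (j:ℝ) + 1 = 1 + a + θ * j from by ring]
    have hBcoeff : B.coeff k = if ν = k then θ ^ k else 0 := by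
      rw [hB, Polynomial.coeff_C_mul]
      rcases eq_or_lt_of_le hν with h | h
      · subst h
        have h1 := hmonic.coeff_natDegree
        rw [hdeg] at h1
        rw [if_pos rfl, h1, mul_one]
      · rw [if_neg (by omega), Polynomial.coeff_eq_zero_of_natDegree_lt (by omega), mul_zero]
    have := fd_sum k B hBdeg
    calc ∑ j ∈ Finset.range (k + 1),
        ((-1 : ℝ) ^ (k - j) * (Nat.choose k j) *
          (Real.Gamma (1 + a + θ * k) / Real.Gamma (1 + a + θ * j))) *
          Real.Gamma (a + ν + θ * j + 1)
        = Real.Gamma (1 + a + θ * k) * ∑ j ∈ Finset.range (k + 1),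
            (-1 : ℝ) ^ (k - j) * (Nat.choose k j) * B.eval (j:ℝ) := by
          rw [Finset.mul_sum]
          refine Finset.sum_congr rfl fun j _ => ?_
          rw [hBeval j]
          have hne : Real.Gamma (1 + a + θ * j) ≠ 0 :=
            (Real.Gamma_pos_of_pos (by have := hpos j; linarith)).ne'
          field_simp
      _ = Real.Gamma (1 + a + θ * k) * ((Nat.factorial k) * B.coeff k) := by rw [this]
      _ = Real.Gamma (1 + a + θ * k) * (Nat.factorial k) * (if ν = k then θ ^ k else 0) := by
          rw [hBcoeff]; ring
  -- collapse outer sum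
  have step1 : ∀ ν ∈ Finset.range (k+1),
      ∑ j ∈ Finset.range (k + 1),
        (θ ^ k *
          (∑ s ∈ Finset.range (ν + 1),
            ((-1 : ℝ) ^ (k - s) / ((Nat.factorial (ν - s)) * (Nat.factorial s))) *
              (Real.Gamma (k + (a + s + 1) / θ) / Real.Gamma ((a + s + 1) / θ))) *
          ((-1 : ℝ) ^ (k - j) * (Nat.choose k j) *
            (Real.Gamma (1 + a + θ * k) / Real.Gamma (1 + a + θ * j)))) *
          Real.Gamma (a + ν + θ * j + 1)
      = (θ ^ k *
          (∑ s ∈ Finset.range (ν + 1),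
            ((-1 : ℝ) ^ (k - s) / ((Nat.factorial (ν - s)) * (Nat.factorial s))) *
              (Real.Gamma (k + (a + s + 1) / θ) / Real.Gamma ((a + s + 1) / θ)))) *
        (Real.Gamma (1 + a + θ * k) * (Nat.factorial k) * (if ν = k then θ ^ k else 0)) := by
    intro ν hν
    rw [← hj ν (Finset.mem_range_succ_iff.mp hν)]
    exact (Finset.sum_congr rfl fun j _ => by ring).trans (Finset.mul_sum _ _ _).symm
  rw [Finset.sum_congr rfl step1]
  rw [Finset.sum_eq_single_of_mem k (Finset.self_mem_range_succ k)
    (fun b _ hb => by rw [if_neg hb]; ring)]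
  rw [if_pos rfl]
  -- the s-sum at ν = k
  have hS : ∑ s ∈ Finset.range (k+1),
      ((-1:ℝ)^(k-s) / ((Nat.factorial (k-s)) * (Nat.factorial s))) *
        (Real.Gamma (k + (a+s+1)/θ) / Real.Gamma ((a+s+1)/θ)) = (θ^k)⁻¹ := by
    set R : Polynomial ℝ := Polynomial.C (θ⁻¹ ^ k) *
      ∏ i ∈ Finset.range k, (X + Polynomial.C (a + 1 + θ * i)) with hR
    have hmonic : (∏ i ∈ Finset.range k, (X + Polynomial.C (a + 1 + θ * i))).Monic :=
      monic_prod_of_monic _ _ fun i _ => monic_X_add_C _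
    have hdeg : (∏ i ∈ Finset.range k, (X + Polynomial.C (a + 1 + θ * i))).natDegree = k := by
      rw [Polynomial.natDegree_prod_of_monic _ _ fun i _ => monic_X_add_C _]
      simp only [Polynomial.natDegree_X_add_C, Finset.sum_const, Finset.card_range, smul_eq_mul,
        mul_one]
    have hRdeg : R.natDegree ≤ k :=
      le_trans (Polynomial.natDegree_C_mul_le _ _) (le_of_eq hdeg)
    have hRcoeff : R.coeff k = θ⁻¹ ^ k := by
      have h1 := hmonic.coeff_natDegree
      rw [hdeg] at h1
      rw [hR, Polynomial.coeff_C_mul, h1, mul_one]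
    have hReval : ∀ s : ℕ, Real.Gamma ((k:ℝ) + (a+s+1)/θ) / Real.Gamma ((a+s+1)/θ)
        = R.eval (s:ℝ) := by
      intro s
      have hs0 : (0:ℝ) ≤ (s:ℝ) := Nat.cast_nonneg s
      have hu : (0:ℝ) < (a+s+1)/θ := div_pos (by linarith) hθ
      rw [show (k:ℝ) + (a+s+1)/θ = (a+s+1)/θ + k from by ring, gamma_ascending _ hu,
        mul_div_cancel_left₀ _ (Real.Gamma_pos_of_pos hu).ne']
      symm
      simp only [hR, Polynomial.eval_mul, Polynomial.eval_C, Polynomial.eval_prod,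
        Polynomial.eval_add, Polynomial.eval_X]
      rw [show (θ⁻¹:ℝ) ^ k = ∏ _i ∈ Finset.range k, θ⁻¹ by
        rw [Finset.prod_const, Finset.card_range], ← Finset.prod_mul_distrib]
      refine Finset.prod_congr rfl fun i _ => ?_
      field_simp
      ring
    have key := fd_sum k R hRdeg
    have hk0 : (Nat.factorial k : ℝ) ≠ 0 := Nat.cast_ne_zero.mpr (Nat.factorial_ne_zero k)
    calc ∑ s ∈ Finset.range (k+1),
        ((-1:ℝ)^(k-s) / ((Nat.factorial (k-s)) * (Nat.factorial s))) *
          (Real.Gamma (k + (a+s+1)/θ) / Real.Gamma ((a+s+1)/θ))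
        = (Nat.factorial k : ℝ)⁻¹ * ∑ s ∈ Finset.range (k+1),
            (-1:ℝ)^(k-s) * (Nat.choose k s) * R.eval (s:ℝ) := by
          rw [Finset.mul_sum]
          refine Finset.sum_congr rfl fun s hs => ?_
          have hsk : s ≤ k := Finset.mem_range_succ_iff.mp hs
          rw [← hReval s, Nat.cast_choose ℝ hsk]
          have h1 : (Nat.factorial s : ℝ) ≠ 0 := Nat.cast_ne_zero.mpr (Nat.factorial_ne_zero s)
          have h2 : (Nat.factorial (k-s) : ℝ) ≠ 0 :=
            Nat.cast_ne_zero.mpr (Nat.factorial_ne_zero (k-s))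
          have hs0 : (0:ℝ) ≤ (s:ℝ) := Nat.cast_nonneg s
          have hΓ : Real.Gamma ((a + (s:ℝ) + 1)/θ) ≠ 0 :=
            (Real.Gamma_pos_of_pos (div_pos (by linarith) hθ)).ne'
          field_simp [hk0, hΓ]
      _ = (Nat.factorial k : ℝ)⁻¹ * ((Nat.factorial k) * R.coeff k) := by rw [key]
      _ = (θ^k)⁻¹ := by rw [hRcoeff, inv_pow]; field_simp
  rw [hS, show (1:ℝ) + a + θ * k = θ * k + a + 1 from by ring,
    show ((Nat.factorial k : ℝ)) = Real.Gamma (k + 1) from (Real.Gamma_nat_eq_factorial k).symm]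
  have hθk : (θ:ℝ)^k ≠ 0 := pow_ne_zero _ hθ0
  field_simp

open MeasureTheory in
lemma integral_step (k : ℕ) (a θ : ℝ) (ha : -1 < a) (hθ : 0 < θ) (S D : ℕ → ℝ) :
    (∫ x in Set.Ioi (0:ℝ), x ^ a * Real.exp (-x) *
        (θ ^ k * ∑ ν ∈ Finset.range (k + 1), x ^ ν * S ν) *
        (∑ j ∈ Finset.range (k + 1), D j * (x ^ θ) ^ j))
    = ∑ ν ∈ Finset.range (k + 1), ∑ j ∈ Finset.range (k + 1),
        (θ ^ k * S ν * D j) * Real.Gamma (a + ν + θ * j + 1) := by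
  have hpos : ∀ ν j : ℕ, (0:ℝ) < a + ν + θ * j + 1 := by
    intro ν j
    have h1 : (0:ℝ) ≤ (ν:ℝ) := Nat.cast_nonneg ν
    have h2 : (0:ℝ) ≤ θ * j := mul_nonneg hθ.le (Nat.cast_nonneg j)
    linarith
  have heq : Set.EqOn (fun x : ℝ => x ^ a * Real.exp (-x) *
        (θ ^ k * ∑ ν ∈ Finset.range (k + 1), x ^ ν * S ν) *
        (∑ j ∈ Finset.range (k + 1), D j * (x ^ θ) ^ j))
      (fun x : ℝ => ∑ ν ∈ Finset.range (k + 1), ∑ j ∈ Finset.range (k + 1),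
        (θ ^ k * S ν * D j) * (Real.exp (-x) * x ^ (a + ν + θ * j + 1 - 1)))
      (Set.Ioi 0) := by
    intro x hx
    have hx0 : (0:ℝ) < x := hx
    have hxp : ∀ ν j : ℕ, x ^ (a + ν + θ * j + 1 - 1) = x ^ a * x ^ ν * (x ^ θ) ^ j := by
      intro ν j
      rw [add_sub_cancel_right, Real.rpow_add hx0, Real.rpow_add hx0,
        Real.rpow_natCast, Real.rpow_mul hx0.le, Real.rpow_natCast]
    simp only [Finset.mul_sum, Finset.sum_mul]
    rw [Finset.sum_comm]
    refine Finset.sum_congr rfl fun ν _ => Finset.sum_congr rfl fun j _ => ?_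
    rw [hxp ν j]
    ring
  rw [setIntegral_congr_fun measurableSet_Ioi heq]
  rw [integral_finset_sum _ (fun ν _ => integrable_finset_sum _ (fun j _ =>
    ((Real.GammaIntegral_convergent (hpos ν j)).const_mul _)))]
  refine Finset.sum_congr rfl fun ν _ => ?_
  rw [integral_finset_sum _ (fun j _ => ((Real.GammaIntegral_convergent (hpos ν j)).const_mul _))]
  refine Finset.sum_congr rfl fun j _ => ?_
  rw [integral_const_mul, ← Real.Gamma_eq_integral (hpos ν j)]

/-- Laguerre biorthogonal normalisation: ∫_0^∞ x^a e^{-x} p_k(x) q_k(x^θ) dx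
= θ^k Γ(θk+a+1) Γ(k+1). -/
theorem laguerre_biorthogonal_norm (k : ℕ) (a θ : ℝ) (ha : -1 < a) (hθ : 0 < θ) :
    ∫ x in Set.Ioi (0:ℝ),
        x ^ a * Real.exp (-x) *
          (θ ^ k * ∑ ν ∈ Finset.range (k + 1), x ^ ν *
            ∑ s ∈ Finset.range (ν + 1),
              ((-1 : ℝ) ^ (k - s) / ((Nat.factorial (ν - s)) * (Nat.factorial s))) *
                (Real.Gamma (k + (a + s + 1) / θ) / Real.Gamma ((a + s + 1) / θ))) *
          (∑ j ∈ Finset.range (k + 1),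
            (-1 : ℝ) ^ (k - j) * (Nat.choose k j) *
              (Real.Gamma (1 + a + θ * k) / Real.Gamma (1 + a + θ * j)) * (x ^ θ) ^ j) =
      θ ^ k * Real.Gamma (θ * k + a + 1) * Real.Gamma (k + 1) := by
  exact (integral_step k a θ ha hθ
      (fun ν => ∑ s ∈ Finset.range (ν + 1),
        ((-1 : ℝ) ^ (k - s) / ((Nat.factorial (ν - s)) * (Nat.factorial s))) *
          (Real.Gamma (k + (a + s + 1) / θ) / Real.Gamma ((a + s + 1) / θ)))
      (fun j => (-1 : ℝ) ^ (k - j) * (Nat.choose k j) *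
        (Real.Gamma (1 + a + θ * k) / Real.Gamma (1 + a + θ * j)))).trans
    (laguerre_sum_identity k a θ ha hθ)
end

section
/- Jacobi biorthogonal polynomials of q-type: q_k(x) = Σ_{j=0}^k (-1)^{k-j} C(k,j) [Γ(1+a+b+k+θj)/Γ(1+a+b+k+θk)] [Γ(1+a+θk)/Γ(1+a+θj)] x^j satisfies ∫_0^1 x^a (1-x)^b p(x) q_k(x^θ) dx = 0 for every polynomial p of degree less than k, where a, b > -1 and θ > 0. -/
open MeasureTheory Finset Polynomial
open scoped fwdDiff

lemma betaCongrAux (s t : ℝ) :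
    ∀ x ∈ Set.Ioo (0:ℝ) 1,
      (x:ℂ) ^ (((s+1:ℝ):ℂ) - 1) * (1 - (x:ℂ)) ^ (((t+1:ℝ):ℂ) - 1)
        = ((x ^ s * (1-x) ^ t : ℝ) : ℂ) := by
  intro x hx
  rw [show (((s+1:ℝ):ℂ) - 1) = ((s:ℝ):ℂ) by push_cast; ring,
      show (((t+1:ℝ):ℂ) - 1) = ((t:ℝ):ℂ) by push_cast; ring,
      show (1 - (x:ℂ)) = ((1-x:ℝ):ℂ) by push_cast; ring,
      ← Complex.ofReal_cpow hx.1.le, ← Complex.ofReal_cpow (by linarith [hx.2] : (0:ℝ) ≤ 1 - x),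
      ← Complex.ofReal_mul]

lemma betaIntegrableAux (s t : ℝ) (hs : -1 < s) (ht : -1 < t) :
    IntegrableOn (fun x : ℝ => x ^ s * (1 - x) ^ t) (Set.Ioo (0:ℝ) 1) := by
  have hs' : (0:ℝ) < s + 1 := by linarith
  have ht' : (0:ℝ) < t + 1 := by linarith
  have h := Complex.betaIntegral_convergent (u := ((s+1 : ℝ) : ℂ)) (v := ((t+1 : ℝ) : ℂ))
    (by simpa using hs') (by simpa using ht')
  rw [intervalIntegrable_iff_integrableOn_Ioo_of_le zero_le_one] at h
  refine (MeasureTheory.IntegrableOn.congr_fun h.re ?_ measurableSet_Ioo)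
  intro x hx
  simp only [RCLike.re_to_complex]
  rw [betaCongrAux s t x hx, Complex.ofReal_re]

lemma betaValueAux (s t : ℝ) (hs : -1 < s) (ht : -1 < t) :
    ∫ x in Set.Ioo (0:ℝ) 1, x ^ s * (1 - x) ^ t
      = Real.Gamma (s+1) * Real.Gamma (t+1) / Real.Gamma (s+t+2) := by
  have hs' : (0:ℝ) < s + 1 := by linarith
  have ht' : (0:ℝ) < t + 1 := by linarith
  have hB := Complex.Gamma_mul_Gamma_eq_betaIntegral (s := ((s+1 : ℝ) : ℂ)) (t := ((t+1 : ℝ) : ℂ))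
    (by simpa using hs') (by simpa using ht')
  rw [Complex.betaIntegral, intervalIntegral.integral_of_le zero_le_one,
    integral_Ioc_eq_integral_Ioo,
    setIntegral_congr_fun measurableSet_Ioo (fun x hx => betaCongrAux s t x hx),
    show ∫ x in Set.Ioo (0:ℝ) 1, ((x ^ s * (1-x) ^ t : ℝ) : ℂ)
        = ((∫ x in Set.Ioo (0:ℝ) 1, x ^ s * (1-x) ^ t : ℝ) : ℂ) from integral_ofReal] at hB
  rw [show ((s+1:ℝ):ℂ) + ((t+1:ℝ):ℂ) = ((s+t+2:ℝ):ℂ) by push_cast; ring] at hB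
  rw [Complex.Gamma_ofReal, Complex.Gamma_ofReal, Complex.Gamma_ofReal,
    ← Complex.ofReal_mul, ← Complex.ofReal_mul] at hB
  have hB' := Complex.ofReal_inj.mp hB
  have hne : Real.Gamma (s+t+2) ≠ 0 := (Real.Gamma_pos_of_pos (by linarith)).ne'
  field_simp
  linarith [hB']

lemma GammaAddNat (x : ℝ) (hx : 0 < x) (n : ℕ) :
    Real.Gamma (x + n) = Real.Gamma x * ∏ i ∈ range n, (x + i) := by
  induction n with
  | zero => simp
  | succ n ih =>
      have : x + (n+1 : ℕ) = (x + n) + 1 := by push_cast; ring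
      rw [this, Real.Gamma_add_one (by positivity), ih, prod_range_succ]
      ring

lemma fwdDiff_polyEval (P : Polynomial ℝ) :
    Δ_[(1:ℝ)] (fun x : ℝ => P.eval x) = fun x : ℝ => (P.comp (X + C 1) - P).eval x := by
  funext x
  simp [fwdDiff, eval_comp]

lemma degree_comp_sub_lt (P : Polynomial ℝ) (k : ℕ) (hP : P.degree < (k + 1 : ℕ)) :
    (P.comp (X + C 1) - P).degree < (k : ℕ) := by
  by_cases h0 : P.natDegree = 0
  · obtain ⟨c, rfl⟩ := natDegree_eq_zero.mp h0
    simp only [C_comp, sub_self, degree_zero]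
    exact WithBot.bot_lt_coe k
  · have hPne : P ≠ 0 := fun h => h0 (by simp [h])
    have hq : (X + C (1:ℝ)).natDegree = 1 := natDegree_X_add_C 1
    have hnd : (P.comp (X + C 1)).natDegree = P.natDegree := by
      rw [natDegree_comp, hq, mul_one]
    have hcne : P.comp (X + C 1) ≠ 0 := by
      intro h
      have := natDegree_comp (p := P) (q := X + C (1:ℝ))
      rw [h, natDegree_zero, hq, mul_one] at this
      exact h0 this.symm
    have hdeg : (P.comp (X + C 1)).degree = P.degree := by
      rw [degree_eq_natDegree hcne, degree_eq_natDegree hPne, hnd]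
    have hlc : (P.comp (X + C 1)).leadingCoeff = P.leadingCoeff := by
      rw [leadingCoeff_comp (by rw [hq]; exact one_ne_zero), (monic_X_add_C (1:ℝ)).leadingCoeff,
        one_pow, mul_one]
    have h1 : (P.comp (X + C 1) - P).degree < P.degree := by
      rw [← hdeg]; exact degree_sub_lt hdeg hcne hlc
    have h2 : P.degree ≤ (k : ℕ) := by
      rw [degree_eq_natDegree hPne] at hP ⊢
      exact_mod_cast Nat.lt_succ_iff.mp (by exact_mod_cast hP)
    exact lt_of_lt_of_le h1 h2

lemma fwdDiff_iter_poly_eq_zero : ∀ (k : ℕ) (P : Polynomial ℝ), P.degree < (k:ℕ) →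
    (Δ_[(1:ℝ)])^[k] (fun x : ℝ => P.eval x) = fun _ => 0 := by
  intro k
  induction k with
  | zero =>
      intro P hP
      have : P = 0 := degree_eq_bot.mp (Nat.WithBot.lt_zero_iff.mp (by exact_mod_cast hP))
      subst this
      funext x; simp
  | succ k ih =>
      intro P hP
      rw [Function.iterate_succ_apply, fwdDiff_polyEval]
      exact ih _ (degree_comp_sub_lt P k hP)

lemma alt_sum_poly (k : ℕ) (P : Polynomial ℝ) (hP : P.degree < (k:ℕ)) :
    ∑ j ∈ range (k+1), (-1:ℝ)^(k-j) * (k.choose j) * P.eval (j:ℝ) = 0 := by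
  have h := fwdDiff_iter_eq_sum_shift (1:ℝ) (fun x : ℝ => P.eval x) k 0
  rw [fwdDiff_iter_poly_eq_zero k P hP] at h
  have : (0:ℝ) = ∑ j ∈ range (k+1), ((-1:ℤ)^(k-j) * (k.choose j)) • P.eval (0 + j • (1:ℝ)) := h
  rw [this]
  refine Finset.sum_congr rfl fun j _ => ?_
  push_cast [zsmul_eq_mul]
  ring_nf


/-- The Jacobi biorthogonal polynomial of q-type is orthogonal (against x^a (1-x)^b on (0,1))
to all polynomials of degree less than k. -/
theorem jacobi_q_orthogonality (k : ℕ) (a b θ : ℝ) (ha : -1 < a) (hb : -1 < b) (hθ : 0 < θ)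
    (p : Polynomial ℝ) (hp : p.degree < k) :
    ∫ x in Set.Ioo (0:ℝ) 1,
        x ^ a * (1 - x) ^ b * p.eval x *
          ∑ j ∈ Finset.range (k + 1),
            (-1 : ℝ) ^ (k - j) * (Nat.choose k j) *
              (Real.Gamma (1 + a + b + k + θ * j) / Real.Gamma (1 + a + b + k + θ * k)) *
              (Real.Gamma (1 + a + θ * k) / Real.Gamma (1 + a + θ * j)) * (x ^ θ) ^ j = 0 := by
  by_cases hp0 : p = 0
  · subst hp0; simp
  have hk : p.natDegree < k := (natDegree_lt_iff_degree_lt hp0).mpr hp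
  set c : ℕ → ℝ := fun j => (-1 : ℝ) ^ (k - j) * (Nat.choose k j) *
      (Real.Gamma (1 + a + b + k + θ * j) / Real.Gamma (1 + a + b + k + θ * k)) *
      (Real.Gamma (1 + a + θ * k) / Real.Gamma (1 + a + θ * j)) with hc
  have hθj : ∀ j : ℕ, (0:ℝ) ≤ θ * j := fun j => by positivity
  have hexp : ∀ j n : ℕ, (-1:ℝ) < a + θ * j + n := fun j n => by
    have := hθj j
    have : (0:ℝ) ≤ (n:ℝ) := Nat.cast_nonneg n
    linarith [hθj j]
  -- pointwise rewriting of the integrand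
  have hpt : ∀ x ∈ Set.Ioo (0:ℝ) 1,
      x ^ a * (1 - x) ^ b * p.eval x * ∑ j ∈ Finset.range (k + 1), c j * (x ^ θ) ^ j
        = ∑ j ∈ Finset.range (k+1), ∑ n ∈ Finset.range k,
            (c j * p.coeff n) * (x ^ (a + θ * j + n) * (1 - x) ^ b) := by
    intro x hx
    have hx0 : (0:ℝ) < x := hx.1
    rw [Polynomial.eval_eq_sum_range' hk]
    simp only [Finset.mul_sum, Finset.sum_mul]
    refine Finset.sum_congr rfl fun j _ => Finset.sum_congr rfl fun n _ => ?_
    rw [← Real.rpow_natCast (x ^ θ) j, ← Real.rpow_mul hx0.le,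
      Real.rpow_add hx0, Real.rpow_add hx0, Real.rpow_natCast x n]
    ring
  have hintg : ∀ (j n : ℕ), IntegrableOn
      (fun x : ℝ => (c j * p.coeff n) * (x ^ (a + θ * j + n) * (1 - x) ^ b))
      (Set.Ioo (0:ℝ) 1) :=
    fun j n => (betaIntegrableAux _ b (hexp j n) hb).const_mul _
  rw [setIntegral_congr_fun measurableSet_Ioo (fun x hx => hpt x hx),
    integral_finset_sum _ (fun j _ => integrable_finset_sum _ (fun n _ => hintg j n))]
  have hval : ∀ j n : ℕ, (∫ x in Set.Ioo (0:ℝ) 1,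
        (c j * p.coeff n) * (x ^ (a + θ * j + n) * (1 - x) ^ b))
      = (c j * p.coeff n) *
          (Real.Gamma (a + θ * j + n + 1) * Real.Gamma (b + 1)
            / Real.Gamma (a + θ * j + n + b + 2)) := by
    intro j n
    rw [MeasureTheory.integral_const_mul, betaValueAux _ b (hexp j n) hb]
  rw [Finset.sum_congr rfl fun j _ => integral_finset_sum _ (fun n _ => hintg j n),
    Finset.sum_congr rfl fun j _ => Finset.sum_congr rfl fun n _ => hval j n,
    Finset.sum_comm]
  refine Finset.sum_eq_zero fun n hn => ?_
  have hn' : n < k := Finset.mem_range.mp hn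
  have hk1 : 1 ≤ k := Nat.one_le_iff_ne_zero.mpr (by omega)
  -- the key cancellation for a fixed monomial degree n < k
  suffices hkey : ∑ j ∈ Finset.range (k+1), c j *
      (Real.Gamma (a + θ * j + n + 1) * Real.Gamma (b + 1)
        / Real.Gamma (a + θ * j + n + b + 2)) = 0 by
    have : ∑ j ∈ Finset.range (k+1), (c j * p.coeff n) *
        (Real.Gamma (a + θ * j + n + 1) * Real.Gamma (b + 1)
          / Real.Gamma (a + θ * j + n + b + 2))
        = p.coeff n * ∑ j ∈ Finset.range (k+1), c j *
            (Real.Gamma (a + θ * j + n + 1) * Real.Gamma (b + 1)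
              / Real.Gamma (a + θ * j + n + b + 2)) := by
      rw [Finset.mul_sum]
      exact Finset.sum_congr rfl fun j _ => by ring
    rw [this, hkey, mul_zero]
  -- set up the polynomial whose k-th finite difference kills the sum
  set P : Polynomial ℝ :=
      (∏ i ∈ Finset.range n, (C θ * X + C (1 + a + i))) *
        (∏ i ∈ Finset.range (k-1-n), (C θ * X + C (a + (n:ℝ) + b + 2 + i))) with hP
  have hdP : P.degree < (k:ℕ) := by
    rw [hP, degree_mul, degree_prod, degree_prod]
    simp only [degree_linear hθ.ne', Finset.sum_const, Finset.card_range]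
    rw [show (n • (1 : WithBot ℕ)) = (n : WithBot ℕ) by simp,
      show ((k-1-n) • (1 : WithBot ℕ)) = ((k-1-n : ℕ) : WithBot ℕ) by simp,
      ← Nat.cast_add, Nat.cast_lt]
    omega
  have hsum := alt_sum_poly k P hdP
  have hcast : ((k-1-n : ℕ) : ℝ) = (k:ℝ) - 1 - n := by
    rw [Nat.cast_sub (by omega), Nat.cast_sub (by exact_mod_cast hk1), Nat.cast_one]
  -- constants
  have hΓK : Real.Gamma (1 + a + b + k + θ * k) ≠ 0 := by
    have : (1:ℝ) ≤ (k:ℝ) := by exact_mod_cast hk1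
    exact (Real.Gamma_pos_of_pos (by linarith [hθj k])).ne'
  have hterm : ∀ j ∈ Finset.range (k+1), c j *
      (Real.Gamma (a + θ * j + n + 1) * Real.Gamma (b + 1)
        / Real.Gamma (a + θ * j + n + b + 2))
      = (Real.Gamma (1 + a + θ * k) / Real.Gamma (1 + a + b + k + θ * k)
          * Real.Gamma (b + 1)) *
        ((-1:ℝ)^(k-j) * (Nat.choose k j) * P.eval (j:ℝ)) := by
    intro j _
    have hB : (0:ℝ) < 1 + a + θ * j := by linarith [hθj j]
    have hw : (0:ℝ) < a + θ * j + n + b + 2 := by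
      have : (0:ℝ) ≤ (n:ℝ) := Nat.cast_nonneg n
      linarith [hθj j]
    have e1 : Real.Gamma (a + θ * j + n + 1)
        = Real.Gamma (1 + a + θ * j) * ∏ i ∈ Finset.range n, (1 + a + θ * j + i) := by
      have h := GammaAddNat (1 + a + θ * j) hB n
      rw [show (1 + a + θ * j) + (n:ℝ) = a + θ * j + n + 1 by ring] at h
      exact h
    have e2 : Real.Gamma (1 + a + b + k + θ * j)
        = Real.Gamma (a + θ * j + n + b + 2)
            * ∏ i ∈ Finset.range (k-1-n), (a + θ * j + n + b + 2 + i) := by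
      have h := GammaAddNat (a + θ * j + n + b + 2) hw (k-1-n)
      rw [show (a + θ * j + n + b + 2) + ((k-1-n : ℕ):ℝ) = 1 + a + b + k + θ * j by
        rw [hcast]; ring] at h
      exact h
    have ePeval : P.eval (j:ℝ) = (∏ i ∈ Finset.range n, (1 + a + θ * j + i)) *
        (∏ i ∈ Finset.range (k-1-n), (a + θ * j + n + b + 2 + i)) := by
      rw [hP]
      simp only [eval_mul, eval_prod, eval_add, eval_C, eval_X]
      congr 1
      · exact Finset.prod_congr rfl fun i _ => by ring
      · exact Finset.prod_congr rfl fun i _ => by ring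
    have hΓB : Real.Gamma (1 + a + θ * j) ≠ 0 := (Real.Gamma_pos_of_pos hB).ne'
    have hΓw : Real.Gamma (a + θ * j + n + b + 2) ≠ 0 := (Real.Gamma_pos_of_pos hw).ne'
    rw [hc]
    simp only []
    rw [e1, e2, ePeval]
    field_simp
  rw [Finset.sum_congr rfl hterm, ← Finset.mul_sum, hsum, mul_zero]
end
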